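/- arXiv:2310.12265 — 2 statements merged into one kernel-verified Lean document; each statement's English description precedes it below -/
import Mathlib

section
/- If p < m, an element w is regular in G(m, p, n) if and only if there is an integer r ≥ 1 such that, setting g := gcd(r, n), w has exactly g cycles, each of length n/g and of weight r/g (mod m). An element w is regular in G(m, m, n) if and only if there is an integer r ≥ 1 such that either (1) setting g := gcd(r, n), w has exactly g cycles, each of length n/g and weight r/g (mod m), or (2) setting g' := gcd(r, n−1), w has exactly g' + 1 cycles, of which g' have length (n−1)/g' and weight r/g' (mod m) and the remaining one is a 1-cycle of weight −r (mod m). -/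
open Equiv Finset
@[ext]
structure GW (m n : ℕ) where
  perm : Equiv.Perm (Fin n)
  wt : Fin n → ZMod m
namespace GW
variable {m n : ℕ}
instance : Mul (GW m n) :=
  ⟨fun x y => ⟨x.perm * y.perm, fun i => x.wt i + y.wt (x.perm⁻¹ i)⟩⟩
instance : One (GW m n) := ⟨⟨1, 0⟩⟩
instance : Inv (GW m n) := ⟨fun x => ⟨x.perm⁻¹, fun i => -x.wt (x.perm i)⟩⟩
@[simp] theorem mul_perm (x y : GW m n) : (x * y).perm = x.perm * y.perm := rfl
@[simp] theorem mul_wt (x y : GW m n) (i : Fin n) :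
    (x * y).wt i = x.wt i + y.wt (x.perm⁻¹ i) := rfl
@[simp] theorem one_perm : (1 : GW m n).perm = 1 := rfl
@[simp] theorem one_wt (i : Fin n) : (1 : GW m n).wt i = 0 := rfl
@[simp] theorem inv_perm (x : GW m n) : (x⁻¹).perm = x.perm⁻¹ := rfl
@[simp] theorem inv_wt (x : GW m n) (i : Fin n) : (x⁻¹).wt i = -x.wt (x.perm i) := rfl
private theorem gw_mul_assoc (a b c : GW m n) : a * b * c = a * (b * c) := by
  ext i
  · simp [mul_assoc]
  · simp [mul_inv_rev, add_assoc]
private theorem gw_one_mul (a : GW m n) : 1 * a = a := by ext i <;> simp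
private theorem gw_mul_one (a : GW m n) : a * 1 = a := by ext i <;> simp
private theorem gw_inv_mul_cancel (a : GW m n) : a⁻¹ * a = 1 := by ext i <;> simp
instance : Group (GW m n) where
  mul := (· * ·)
  one := 1
  inv := Inv.inv
  mul_assoc := gw_mul_assoc
  one_mul := gw_one_mul
  mul_one := gw_mul_one
  inv_mul_cancel := gw_inv_mul_cancel
def cycleOf (w : GW m n) (i : Fin n) : Finset (Fin n) :=
  Finset.univ.filter fun j => w.perm.SameCycle i j
def cycles (w : GW m n) : Finset (Finset (Fin n)) :=
  Finset.univ.image fun i => w.cycleOf i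
def cycWt (w : GW m n) (C : Finset (Fin n)) : ZMod m := ∑ i ∈ C, w.wt i
def numCycles (w : GW m n) : ℕ := (cycles w).card
def c0 (w : GW m n) : ℕ := ((cycles w).filter fun C => cycWt w C = 0).card
def codimfix (w : GW m n) : ℕ := n - c0 w
def wtTot (w : GW m n) : ZMod m := ∑ i, w.wt i

-- NEW PIECES BELOW --

/-- The base relation on cycles of `w` induced by `u`: two cycles of `w` are related if
some cycle of `u` meets both of them. -/
def piRelBase (u w : GW m n) (C₁ C₂ : Finset (Fin n)) : Prop :=
  C₁ ∈ cycles w ∧ C₂ ∈ cycles w ∧ ∃ D ∈ cycles u, (D ∩ C₁).Nonempty ∧ (D ∩ C₂).Nonempty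

/-- The equivalence relation on the cycles of `w` generated by `piRelBase`. -/
def piRel (u w : GW m n) : Finset (Fin n) → Finset (Fin n) → Prop :=
  Relation.EqvGen (piRelBase u w)

open Classical in
/-- The part of the partition `Π_u(w)` containing the cycle `C` of `w`. -/
noncomputable def piPart (u w : GW m n) (C : Finset (Fin n)) : Finset (Finset (Fin n)) :=
  (cycles w).filter fun C' => piRel u w C C'

/-- The set partition `Π_u(w)` of the cycles of `w`, as the set of its parts. -/
noncomputable def piParts (u w : GW m n) : Finset (Finset (Finset (Fin n))) :=
  (cycles w).image fun C => piPart u w C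

/-- The weight of a collection `B` of cycles: the sum of the weights of its cycles. -/
def partWt (w : GW m n) (B : Finset (Finset (Fin n))) : ZMod m :=
  ∑ C ∈ B, cycWt w C

open Classical in
/-- The number of parts of `Π_u(w)` of nonzero total weight. -/
noncomputable def piPartsNonzeroWt (u w : GW m n) : ℕ :=
  ((piParts u w).filter fun B => partWt w B ≠ 0).card

/-- The support of a collection of cycles: the union of the cycles' underlying sets. -/
def supp (B : Finset (Finset (Fin n))) : Finset (Fin n) := B.sup id

/-- Restriction of a permutation to an invariant set `A` (junk value `1` if `A` is
not invariant): it agrees with `σ` on `A` and is the identity off `A`. -/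
noncomputable def restrictPerm (σ : Equiv.Perm (Fin n)) (A : Finset (Fin n)) :
    Equiv.Perm (Fin n) :=
  if h : ∀ i, σ i ∈ A ↔ i ∈ A then
    { toFun := fun i => if i ∈ A then σ i else i
      invFun := fun i => if i ∈ A then σ.symm i else i
      left_inv := by
        intro i
        by_cases hi : i ∈ A
        · simp [hi, (h i).mpr hi]
        · simp [hi]
      right_inv := by
        intro j
        by_cases hj : j ∈ A
        · have hs : σ.symm j ∈ A := by
            have h2 := h (σ.symm j)
            rw [Equiv.apply_symm_apply] at h2
            exact h2.mp hj
          simp [hj, hs]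
        · simp [hj] }
  else 1


/-- The restriction `x|_A` of `x` to a subset `A` of `{1,…,n}` (stabilized by `x`):
it agrees with `x` on `A` and acts as the identity, with weight `0`, off `A`. -/
noncomputable def restrict (x : GW m n) (A : Finset (Fin n)) : GW m n :=
  ⟨restrictPerm x.perm A, fun i => if i ∈ A then x.wt i else 0⟩

/-- The cycles of `x` contained in `A`; for `x = y|_A` this gives the cycles of the
restriction of `y` to `A`, viewed as an element of `G(m,1,#A)`. -/
def cyclesIn (x : GW m n) (A : Finset (Fin n)) : Finset (Finset (Fin n)) :=
  (cycles x).filter fun C => C ⊆ A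

/-- The monomial matrix representing `w`: the nonzero entry in column `j` sits in row
`w.perm j` and equals `ζ^(a_(w.perm j))`, where `ζ = exp(2πi/m)`. -/
noncomputable def toMatrix (w : GW m n) : Matrix (Fin n) (Fin n) ℂ :=
  Matrix.of fun i j =>
    if w.perm j = i then Complex.exp (2 * Real.pi * Complex.I * ((w.wt i).val : ℂ) / (m : ℂ))
    else 0

/-- `S` (a set of cycles of `w`) can be partitioned into singletons whose weight is
`0 (mod p)` and pairs of cycles whose weights sum to `0` in `ℤ/mℤ`; encoded by an
involution pairing up the cycles. -/
def PairedUp (p : ℕ) (hpm : p ∣ m) (w : GW m n) (S : Finset (Finset (Fin n))) : Prop :=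
  ∃ π : {C // C ∈ S} → {C // C ∈ S}, Function.Involutive π ∧
    (∀ C, π C = C → ZMod.castHom hpm (ZMod p) (cycWt w C.1) = 0) ∧
    (∀ C, π C ≠ C → cycWt w C.1 + cycWt w (π C).1 = 0)

/-- Membership in `G(m,p,n)`: the total weight is `0 (mod p)`. -/
def Gmem (p : ℕ) (hpm : p ∣ m) (w : GW m n) : Prop :=
  ZMod.castHom hpm (ZMod p) (wtTot w) = 0

/-- A reflection of `G(m,p,n)`: an element of the group whose fixed space has codimension 1. -/
def IsRefl (p : ℕ) (hpm : p ∣ m) (t : GW m n) : Prop :=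
  Gmem p hpm t ∧ codimfix t = 1

/-- The reflection length of `w` with respect to the reflections of `G(m,p,n)`. -/
noncomputable def lR (p : ℕ) (hpm : p ∣ m) (w : GW m n) : ℕ :=
  sInf {k | ∃ l : List (GW m n), (∀ t ∈ l, IsRefl p hpm t) ∧ l.length = k ∧ l.prod = w}

/-- The order `≤_f` determined by a subadditive function `f`. -/
def leF (f : GW m n → ℕ) (x y : GW m n) : Prop := f x + f (x⁻¹ * y) = f y

/-- The interval `[id, w]_f` inside the poset `(G(m,p,n), ≤_f)`. -/
def interval (p : ℕ) (hpm : p ∣ m) (f : GW m n → ℕ) (w : GW m n) : Set (GW m n) :=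
  {u | Gmem p hpm u ∧ leF f u w}

/-- A vector `v ∈ ℂⁿ` is regular for `G(m,p,n)` if it is fixed by no reflection. -/
def IsRegularVec (p : ℕ) (hpm : p ∣ m) (v : Fin n → ℂ) : Prop :=
  ∀ t : GW m n, IsRefl p hpm t → (toMatrix t).mulVec v ≠ v

/-- An element `w ∈ G(m,p,n)` is regular if it has an eigenvector that is a regular vector. -/
def IsRegularElt (p : ℕ) (hpm : p ∣ m) (w : GW m n) : Prop :=
  ∃ v : Fin n → ℂ, v ≠ 0 ∧ (∃ c : ℂ, (toMatrix w).mulVec v = c • v) ∧ IsRegularVec p hpm v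

end GW


-- ===================== AUXILIARY DEVELOPMENT =====================
section ECdef

noncomputable def ec (q : ℚ) : ℂ := Complex.exp (2 * Real.pi * Complex.I * (q:ℂ))

lemma ec_add (a b : ℚ) : ec (a+b) = ec a * ec b := by
  rw [ec, ec, ec, ← Complex.exp_add]; push_cast; ring_nf

@[simp] lemma ec_zero : ec 0 = 1 := by simp [ec]

lemma ec_ne_zero (q : ℚ) : ec q ≠ 0 := Complex.exp_ne_zero _

lemma ec_pow (k : ℕ) (q : ℚ) : (ec q)^k = ec (k * q) := by
  rw [ec, ec, ← Complex.exp_nat_mul]; push_cast; ring_nf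

lemma ec_eq_one_iff (q : ℚ) : ec q = 1 ↔ ∃ z : ℤ, q = z := by
  rw [ec, Complex.exp_eq_one_iff]
  constructor
  · rintro ⟨z, hz⟩
    refine ⟨z, ?_⟩
    have h2 : (2 * Real.pi * Complex.I : ℂ) ≠ 0 := by
      exact mul_ne_zero (mul_ne_zero two_ne_zero
        (Complex.ofReal_ne_zero.mpr Real.pi_ne_zero)) Complex.I_ne_zero
    have : (q:ℂ) = (z:ℂ) := by
      apply mul_left_cancel₀ h2
      rw [hz]; ring
    exact_mod_cast this
  · rintro ⟨z, hz⟩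
    exact ⟨z, by rw [hz]; push_cast; ring⟩

lemma ec_eq_ec_iff (a b : ℚ) : ec a = ec b ↔ ∃ z : ℤ, a - b = z := by
  rw [← ec_eq_one_iff]
  constructor
  · intro h
    have : ec (a - b) * ec b = ec a := by rw [← ec_add]; ring_nf
    rw [h] at this
    exact mul_right_cancel₀ (ec_ne_zero b) (by rw [this, one_mul])
  · intro h
    have : ec a = ec (a-b) * ec b := by rw [← ec_add]; ring_nf
    rw [this, h, one_mul]

lemma abs_ec (q : ℚ) : ‖ec q‖ = 1 := by
  rw [ec, Complex.norm_exp]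
  have : (2 * Real.pi * Complex.I * (q:ℂ)).re = 0 := by
    simp [Complex.mul_re, Complex.mul_im]
  rw [this, Real.exp_zero]

lemma ec_div_eq_one_iff (a : ℤ) (b : ℕ) (hb : b ≠ 0) :
    ec ((a : ℚ) / b) = 1 ↔ (b:ℤ) ∣ a := by
  rw [ec_eq_one_iff]
  constructor
  · rintro ⟨z, hz⟩
    have hb' : (b:ℚ) ≠ 0 := Nat.cast_ne_zero.mpr hb
    field_simp at hz
    have hz' : a = z * (b:ℤ) := by rw [mul_comm]; exact_mod_cast hz
    exact ⟨z, by rw [hz']; ring⟩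
  · rintro ⟨z, hz⟩
    have hb' : (b:ℚ) ≠ 0 := Nat.cast_ne_zero.mpr hb
    refine ⟨z, by rw [hz]; push_cast; field_simp⟩

end ECdef

namespace GW
variable {m n : ℕ}

lemma mem_cycleOf {w : GW m n} {i j : Fin n} : j ∈ cycleOf w i ↔ w.perm.SameCycle i j := by
  simp [cycleOf]

lemma self_mem_cycleOf (w : GW m n) (i : Fin n) : i ∈ cycleOf w i :=
  mem_cycleOf.mpr (Equiv.Perm.SameCycle.refl _ _)

lemma cycleOf_eq_of_sameCycle {w : GW m n} {i j : Fin n} (h : w.perm.SameCycle i j) :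
    cycleOf w i = cycleOf w j := by
  ext k; simp only [mem_cycleOf]
  exact ⟨fun hk => h.symm.trans hk, fun hk => h.trans hk⟩

lemma cycleOf_eq_of_mem {w : GW m n} {i j : Fin n} (h : j ∈ cycleOf w i) :
    cycleOf w j = cycleOf w i := (cycleOf_eq_of_sameCycle (mem_cycleOf.mp h)).symm

lemma cycleOf_mem_cycles (w : GW m n) (i : Fin n) : cycleOf w i ∈ cycles w :=
  Finset.mem_image_of_mem _ (Finset.mem_univ i)

lemma mem_cycles {w : GW m n} {C : Finset (Fin n)} :
    C ∈ cycles w ↔ ∃ i, C = cycleOf w i := by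
  simp [cycles, eq_comm]

lemma nonempty_of_mem_cycles {w : GW m n} {C} (h : C ∈ cycles w) : C.Nonempty := by
  obtain ⟨i, rfl⟩ := mem_cycles.mp h; exact ⟨i, self_mem_cycleOf w i⟩

lemma cycleOf_eq_iff {w : GW m n} {i j : Fin n} :
    cycleOf w i = cycleOf w j ↔ w.perm.SameCycle i j := by
  refine ⟨fun h => mem_cycleOf.mp ?_, cycleOf_eq_of_sameCycle⟩
  rw [h]; exact self_mem_cycleOf w j

lemma cycles_disjoint {w : GW m n} {C D : Finset (Fin n)} (hC : C ∈ cycles w)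
    (hD : D ∈ cycles w) (hne : C ≠ D) : Disjoint C D := by
  obtain ⟨i, rfl⟩ := mem_cycles.mp hC
  obtain ⟨j, rfl⟩ := mem_cycles.mp hD
  rw [Finset.disjoint_left]
  intro a haC haD
  exact hne (by rw [← cycleOf_eq_of_mem haC, ← cycleOf_eq_of_mem haD])

lemma biUnion_cycles (w : GW m n) : (cycles w).biUnion id = Finset.univ := by
  apply Finset.eq_univ_of_forall
  intro i
  exact Finset.mem_biUnion.mpr ⟨cycleOf w i, cycleOf_mem_cycles w i, self_mem_cycleOf w i⟩

lemma sum_over_cycles {M : Type*} [AddCommMonoid M] (w : GW m n) (f : Fin n → M) :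
    ∑ C ∈ cycles w, ∑ i ∈ C, f i = ∑ i, f i := by
  have h := Finset.sum_biUnion (s := cycles w) (t := id) (f := f)
    (fun C hC D hD hne => cycles_disjoint hC hD hne)
  rw [biUnion_cycles] at h
  simpa using h.symm

lemma sum_cycles_card (w : GW m n) : ∑ C ∈ cycles w, C.card = n := by
  have := sum_over_cycles w (fun _ => (1:ℕ))
  simpa [Finset.card_univ] using this

lemma wtTot_eq_sum_cycWt (w : GW m n) : wtTot w = ∑ C ∈ cycles w, cycWt w C :=
  (sum_over_cycles w w.wt).symm

lemma numCycles_le (w : GW m n) : numCycles w ≤ n := by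
  rw [numCycles]
  calc (cycles w).card = ∑ _C ∈ cycles w, 1 := by simp
    _ ≤ ∑ C ∈ cycles w, C.card := by
        apply Finset.sum_le_sum
        intro C hC
        exact Finset.card_pos.mpr (nonempty_of_mem_cycles hC)
    _ = n := sum_cycles_card w

/-- Minimal period of `i` under the underlying permutation. -/
noncomputable def per (w : GW m n) (i : Fin n) : ℕ := Function.minimalPeriod w.perm i

lemma perm_pow_apply (w : GW m n) (k : ℕ) (i : Fin n) :
    (w.perm ^ k) i = (⇑w.perm)^[k] i := by rw [Equiv.Perm.coe_pow]

lemma mem_periodicPts (w : GW m n) (i : Fin n) : i ∈ Function.periodicPts w.perm := by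
  refine ⟨orderOf w.perm, ?_, ?_⟩
  · exact orderOf_pos w.perm
  · show (⇑w.perm)^[orderOf w.perm] i = i
    rw [← perm_pow_apply, pow_orderOf_eq_one]; rfl

lemma per_pos (w : GW m n) (i : Fin n) : 0 < per w i :=
  Function.minimalPeriod_pos_of_mem_periodicPts (mem_periodicPts w i)

lemma pow_per_apply (w : GW m n) (i : Fin n) : (w.perm ^ per w i) i = i := by
  rw [perm_pow_apply]; exact Function.iterate_minimalPeriod

lemma pow_apply_eq_self_iff (w : GW m n) (k : ℕ) (i : Fin n) :
    (w.perm ^ k) i = i ↔ per w i ∣ k := by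
  rw [perm_pow_apply]
  exact Function.isPeriodicPt_iff_minimalPeriod_dvd

lemma pow_apply_mod (w : GW m n) (k : ℕ) (i : Fin n) :
    (w.perm ^ (k % per w i)) i = (w.perm ^ k) i := by
  rw [perm_pow_apply, perm_pow_apply]
  exact Function.iterate_mod_minimalPeriod_eq

lemma pow_apply_inj {w : GW m n} {a b : ℕ} {i : Fin n} (ha : a < per w i) (hb : b < per w i)
    (h : (w.perm ^ a) i = (w.perm ^ b) i) : a = b := by
  have := Function.iterate_injOn_Iio_minimalPeriod (f := ⇑w.perm) (x := i)
  simp only [perm_pow_apply] at h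
  exact this (Set.mem_Iio.mpr ha) (Set.mem_Iio.mpr hb) h

lemma sameCycle_iff_exists_pow_lt_per {w : GW m n} {i j : Fin n} :
    w.perm.SameCycle i j ↔ ∃ k < per w i, (w.perm ^ k) i = j := by
  constructor
  · intro h
    obtain ⟨k, _, hk⟩ := h.exists_pow_eq'
    exact ⟨k % per w i, Nat.mod_lt _ (per_pos w i), by rw [pow_apply_mod]; exact hk⟩
  · rintro ⟨k, _, hk⟩
    exact ⟨(k:ℤ), by rw [← hk]; rfl⟩

lemma cycleOf_eq_image (w : GW m n) (i : Fin n) :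
    cycleOf w i = (Finset.range (per w i)).image (fun k => (w.perm ^ k) i) := by
  ext j
  rw [mem_cycleOf, sameCycle_iff_exists_pow_lt_per]
  simp only [Finset.mem_image, Finset.mem_range]

lemma card_cycleOf (w : GW m n) (i : Fin n) : (cycleOf w i).card = per w i := by
  rw [cycleOf_eq_image]
  rw [Finset.card_image_of_injOn, Finset.card_range]
  intro a ha b hb hab
  exact pow_apply_inj (Finset.mem_range.mp (Finset.mem_coe.mp ha))
    (Finset.mem_range.mp (Finset.mem_coe.mp hb)) hab

lemma per_apply (w : GW m n) (i : Fin n) : per w (w.perm i) = per w i :=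
  Function.minimalPeriod_apply (mem_periodicPts w i)

lemma per_pow_apply (w : GW m n) (k : ℕ) (i : Fin n) : per w ((w.perm ^ k) i) = per w i := by
  rw [perm_pow_apply]
  exact Function.minimalPeriod_apply_iterate (mem_periodicPts w i) k

lemma perm_mem_cycleOf_iff {w : GW m n} {i j : Fin n} :
    w.perm j ∈ cycleOf w i ↔ j ∈ cycleOf w i := by
  rw [mem_cycleOf, mem_cycleOf]
  exact ⟨fun h => h.trans (Equiv.Perm.sameCycle_apply_right.mpr (Equiv.Perm.SameCycle.refl _ _)).symm,
    fun h => h.trans (Equiv.Perm.sameCycle_apply_right.mpr (Equiv.Perm.SameCycle.refl _ _))⟩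

end GW


namespace GW
variable {m n : ℕ}

lemma ec_natMod (k m : ℕ) (hm : 0 < m) : ec (((k % m : ℕ) : ℚ)/m) = ec ((k:ℚ)/m) := by
  rw [ec_eq_ec_iff]
  refine ⟨-((k / m : ℕ) : ℤ), ?_⟩
  have hd := Nat.div_add_mod k m
  have hm' : (m:ℚ) ≠ 0 := Nat.cast_ne_zero.mpr hm.ne'
  have hq : ((k % m : ℕ):ℚ) = (k:ℚ) - (m:ℚ)*((k/m : ℕ):ℚ) := by
    have h2 : ((m * (k/m) + k % m : ℕ) : ℚ) = ((k : ℕ) : ℚ) := by rw [hd]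
    push_cast at h2
    linarith
  rw [hq, Int.cast_neg, Int.cast_natCast]
  field_simp
  ring

/-- `E m a = ζ_m^(a.val)` as `ec`. -/
noncomputable def E (m : ℕ) (a : ZMod m) : ℂ := ec ((a.val : ℚ) / m)

lemma E_ne_zero (m : ℕ) (a : ZMod m) : E m a ≠ 0 := ec_ne_zero _

lemma E_add (hm : 0 < m) (a b : ZMod m) : E m (a + b) = E m a * E m b := by
  haveI : NeZero m := ⟨hm.ne'⟩
  rw [E, E, E, ← ec_add]
  have hv : (a + b).val = (a.val + b.val) % m := ZMod.val_add a b
  rw [hv, ec_natMod _ _ hm]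
  congr 1
  push_cast
  ring

lemma E_zero (hm : 0 < m) : E m (0 : ZMod m) = 1 := by
  haveI : NeZero m := ⟨hm.ne'⟩
  rw [E, ZMod.val_zero]
  simp

lemma E_pow_m (hm : 0 < m) (a : ZMod m) : (E m a) ^ m = 1 := by
  rw [E, ec_pow, ec_eq_one_iff]
  have hm' : (m:ℚ) ≠ 0 := Nat.cast_ne_zero.mpr hm.ne'
  exact ⟨(a.val : ℤ), by push_cast; field_simp⟩

lemma E_eq_one_iff (hm : 0 < m) (a : ZMod m) : E m a = 1 ↔ a = 0 := by
  haveI : NeZero m := ⟨hm.ne'⟩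
  constructor
  · intro h
    rw [E] at h
    rw [show ((a.val : ℚ)/m) = ((a.val : ℤ) : ℚ)/(m:ℕ) by norm_num] at h
    rw [ec_div_eq_one_iff _ _ hm.ne'] at h
    obtain ⟨z, hz⟩ := h
    have hlt : a.val < m := ZMod.val_lt a
    have hdvd : (m:ℤ) ∣ (a.val:ℤ) := ⟨z, hz⟩
    have hdvd' : m ∣ a.val := Int.ofNat_dvd.mp (by exact_mod_cast hdvd)
    have hv0 : a.val = 0 := Nat.eq_zero_of_dvd_of_lt hdvd' hlt
    exact (ZMod.val_eq_zero a).mp hv0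
  · rintro rfl
    exact E_zero hm

lemma E_natCast (hm : 0 < m) (k : ℕ) : E m ((k : ℕ) : ZMod m) = ec ((k : ℚ) / m) := by
  haveI : NeZero m := ⟨hm.ne'⟩
  rw [E, ZMod.val_natCast, ec_natMod _ _ hm]

lemma E_neg (hm : 0 < m) (a : ZMod m) : E m (-a) = (E m a)⁻¹ := by
  have h : E m (-a) * E m a = 1 := by rw [← E_add hm, neg_add_cancel, E_zero hm]
  exact eq_inv_of_mul_eq_one_left h

lemma toMatrix_mulVec_apply (hm : 0 < m) (w : GW m n) (v : Fin n → ℂ) (i : Fin n) :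
    (toMatrix w).mulVec v i = E m (w.wt i) * v (w.perm⁻¹ i) := by
  rw [Matrix.mulVec, dotProduct]
  rw [Finset.sum_eq_single (w.perm⁻¹ i)]
  · have h1 : toMatrix w i (w.perm⁻¹ i)
        = Complex.exp (2 * Real.pi * Complex.I * ((w.wt i).val : ℂ) / (m : ℂ)) := by
      rw [toMatrix]
      exact if_pos (w.perm.apply_symm_apply i)
    rw [h1]
    congr 1
    rw [E, ec]
    congr 1
    push_cast
    ring
  · intro j _ hj
    have h1 : toMatrix w i j = 0 := by
      rw [toMatrix]
      refine if_neg ?_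
      intro hc
      exact hj (by rw [← hc]; simp)
    rw [h1, zero_mul]
  · intro h
    exact absurd (Finset.mem_univ _) h

lemma eigen_iff (hm : 0 < m) (w : GW m n) (v : Fin n → ℂ) (c : ℂ) :
    (toMatrix w).mulVec v = c • v ↔ ∀ i, E m (w.wt i) * v (w.perm⁻¹ i) = c * v i := by
  constructor
  · intro h i
    have := congrFun h i
    rw [toMatrix_mulVec_apply hm] at this
    simpa using this
  · intro h
    funext i
    rw [toMatrix_mulVec_apply hm]
    simpa using h i

lemma eigen_step (hm : 0 < m) {w : GW m n} {v : Fin n → ℂ} {c : ℂ}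
    (h : (toMatrix w).mulVec v = c • v) (i : Fin n) :
    E m (w.wt (w.perm i)) * v i = c * v (w.perm i) := by
  have h2 := (eigen_iff hm w v c).mp h (w.perm i)
  rw [show w.perm⁻¹ (w.perm i) = i from w.perm.symm_apply_apply i] at h2
  exact h2

end GW


section RootExtract

lemma exists_ec_of_pow_eq_one {x : ℂ} {N : ℕ} (hN : 0 < N) (h : x ^ N = 1) :
    ∃ s < N, x = ec ((s:ℚ)/N) := by
  haveI : NeZero N := ⟨hN.ne'⟩
  have hp : IsPrimitiveRoot (ec ((1:ℚ)/N)) N := by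
    have h2 := Complex.isPrimitiveRoot_exp N hN.ne'
    have h3 : ec ((1:ℚ)/N) = Complex.exp (2 * Real.pi * Complex.I / N) := by
      rw [ec]; congr 1; push_cast; ring
    rwa [h3]
  obtain ⟨s, hs, hxe⟩ := hp.eq_pow_of_pow_eq_one h
  refine ⟨s, hs, ?_⟩
  rw [← hxe, ec_pow]
  congr 1
  push_cast
  ring

end RootExtract

namespace GW
variable {m n : ℕ}

def diagElt (i0 : Fin n) (a : ZMod m) : GW m n := ⟨1, fun k => if k = i0 then a else 0⟩

def swapElt (i j : Fin n) (a : ZMod m) : GW m n :=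
  ⟨Equiv.swap i j, fun k => if k = i then a else if k = j then -a else 0⟩

lemma cycleOf_of_fixed {w : GW m n} {i : Fin n} (h : w.perm i = i) : cycleOf w i = {i} := by
  have hper : per w i = 1 := Function.minimalPeriod_eq_one_iff_isFixedPt.mpr h
  rw [cycleOf_eq_image, hper]
  simp

lemma fixed_of_card_one {w : GW m n} {i : Fin n} (h : (cycleOf w i).card = 1) :
    w.perm i = i := by
  rw [card_cycleOf] at h
  exact Function.minimalPeriod_eq_one_iff_isFixedPt.mp h

lemma cycles_of_perm_one {w : GW m n} (h : w.perm = 1) :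
    cycles w = Finset.univ.image (fun i => ({i} : Finset (Fin n))) := by
  rw [cycles]
  apply Finset.image_congr
  intro i _
  exact cycleOf_of_fixed (by rw [h]; rfl)

lemma numCycles_of_perm_one {w : GW m n} (h : w.perm = 1) : numCycles w = n := by
  rw [numCycles, cycles_of_perm_one h,
    Finset.card_image_of_injective _ (fun a b hab => Finset.singleton_injective hab)]
  simp

lemma c0_of_perm_one {w : GW m n} (h : w.perm = 1) :
    c0 w = (Finset.univ.filter fun k => w.wt k = 0).card := by
  rw [c0, cycles_of_perm_one h, Finset.filter_image]
  rw [Finset.card_image_of_injective _ (fun a b hab => Finset.singleton_injective hab)]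
  congr 1
  apply Finset.filter_congr
  intro k _
  simp [cycWt]

lemma wtTot_diag (i0 : Fin n) (a : ZMod m) : wtTot (diagElt i0 a) = a := by
  rw [wtTot, diagElt]
  simp

lemma isRefl_diag {p : ℕ} (hp : 0 < p) (hplt : p < m) (hpm : p ∣ m) (i0 : Fin n) :
    IsRefl p hpm (diagElt i0 ((p : ℕ) : ZMod m)) := by
  have hn : 0 < n := i0.pos
  constructor
  · rw [Gmem, wtTot_diag, map_natCast, ZMod.natCast_self]
  · rw [codimfix, c0_of_perm_one (by rfl)]
    have hfil : (Finset.univ.filter fun k => (diagElt i0 ((p : ℕ) : ZMod m)).wt k = 0)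
        = Finset.univ.erase i0 := by
      ext k
      simp only [Finset.mem_filter, Finset.mem_univ, true_and, Finset.mem_erase, and_true]
      rw [diagElt]
      by_cases hk : k = i0
      · simp only [hk, if_true]
        constructor
        · intro h0
          exact absurd ((ZMod.natCast_eq_zero_iff p m).mp h0)
            (fun hd => absurd (Nat.le_of_dvd hp hd) (not_le.mpr hplt))
        · intro h0; exact absurd rfl h0
      · simp [hk]
    rw [hfil, Finset.card_erase_of_mem (Finset.mem_univ i0)]
    simp only [Finset.card_univ, Fintype.card_fin]
    omega

lemma diag_fixes (hm : 0 < m) (i0 : Fin n) (a : ZMod m) (v : Fin n → ℂ) (hv : v i0 = 0) :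
    (toMatrix (diagElt i0 a)).mulVec v = v := by
  funext k
  rw [toMatrix_mulVec_apply hm]
  have hperm : (diagElt i0 a).perm⁻¹ k = k := rfl
  rw [hperm]
  by_cases hk : k = i0
  · subst hk
    rw [hv, mul_zero]
  · have : (diagElt i0 a).wt k = 0 := by rw [diagElt]; simp [hk]
    rw [this, E_zero hm, one_mul]

lemma diag_not_fixes (hm : 0 < m) {i0 : Fin n} {a : ZMod m} {v : Fin n → ℂ}
    (ha : a ≠ 0) (hv : v i0 ≠ 0) : (toMatrix (diagElt i0 a)).mulVec v ≠ v := by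
  intro h
  have h2 := congrFun h i0
  rw [toMatrix_mulVec_apply hm] at h2
  have hperm : (diagElt i0 a).perm⁻¹ i0 = i0 := rfl
  rw [hperm] at h2
  have hwt : (diagElt i0 a).wt i0 = a := by rw [diagElt]; simp
  rw [hwt] at h2
  have hE : E m a = 1 := by
    apply mul_right_cancel₀ hv
    rw [h2, one_mul]
  exact ha ((E_eq_one_iff hm a).mp hE)

section Swap
variable {i j : Fin n} {a : ZMod m}

lemma swapElt_wt_i (hij : i ≠ j) : (swapElt i j a).wt i = a := by rw [swapElt]; simp

lemma swapElt_wt_j (hij : i ≠ j) : (swapElt i j a).wt j = -a := by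
  rw [swapElt]; simp [hij.symm]

lemma swapElt_wt_other {k : Fin n} (hki : k ≠ i) (hkj : k ≠ j) : (swapElt i j a).wt k = 0 := by
  rw [swapElt]; simp [hki, hkj]

lemma cycleOf_swapElt_left (hij : i ≠ j) :
    cycleOf (swapElt i j a) i = {i, j} := by
  have hper : per (swapElt i j a) i = 2 := by
    have hdvd : per (swapElt i j a) i ∣ 2 := by
      rw [← pow_apply_eq_self_iff]
      have : (swapElt i j a).perm ^ 2 = 1 := by
        rw [swapElt]
        simp [sq, Equiv.swap_mul_self]
      rw [this]; rfl
    have hne1 : per (swapElt i j a) i ≠ 1 := by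
      intro h1
      have h2 := pow_per_apply (swapElt i j a) i
      rw [h1, pow_one] at h2
      have : (swapElt i j a).perm i = j := Equiv.swap_apply_left i j
      rw [this] at h2
      exact hij h2.symm
    rcases (Nat.dvd_prime Nat.prime_two).mp hdvd with h | h
    · exact absurd h hne1
    · exact h
  rw [cycleOf_eq_image, hper]
  have : Finset.range 2 = {0, 1} := by decide
  rw [this]
  simp [Equiv.swap_apply_left, swapElt]

lemma cycles_swapElt (hij : i ≠ j) :
    cycles (swapElt i j a) =
      insert {i, j} (((Finset.univ.erase i).erase j).image fun k => ({k} : Finset (Fin n))) := by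
  ext C
  rw [mem_cycles]
  constructor
  · rintro ⟨k, rfl⟩
    by_cases hk : k = i
    · subst hk
      rw [cycleOf_swapElt_left hij]
      exact Finset.mem_insert_self _ _
    by_cases hk2 : k = j
    · have hcyc : cycleOf (swapElt i j a) k = cycleOf (swapElt i j a) i := by
        apply cycleOf_eq_of_mem
        rw [cycleOf_swapElt_left hij, hk2]
        exact Finset.mem_insert_of_mem (Finset.mem_singleton_self _)
      rw [hcyc, cycleOf_swapElt_left hij]
      exact Finset.mem_insert_self _ _
    · have hfix : (swapElt i j a).perm k = k := Equiv.swap_apply_of_ne_of_ne hk hk2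
      rw [cycleOf_of_fixed hfix]
      apply Finset.mem_insert_of_mem
      exact Finset.mem_image_of_mem _ (by simp [hk, hk2])
  · intro hC
    rcases Finset.mem_insert.mp hC with hC | hC
    · exact ⟨i, by rw [hC, cycleOf_swapElt_left hij]⟩
    · obtain ⟨k, hk, rfl⟩ := Finset.mem_image.mp hC
      simp only [Finset.mem_erase] at hk
      exact ⟨k, by rw [cycleOf_of_fixed (Equiv.swap_apply_of_ne_of_ne hk.2.1 hk.1)]⟩

lemma numCycles_swapElt (hij : i ≠ j) : numCycles (swapElt i j a : GW m n) = n - 1 := by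
  rw [numCycles, cycles_swapElt hij]
  rw [Finset.card_insert_of_notMem]
  · rw [Finset.card_image_of_injective _ (fun A B hAB => Finset.singleton_injective hAB)]
    rw [Finset.card_erase_of_mem (by simp [hij.symm]), Finset.card_erase_of_mem (Finset.mem_univ i)]
    simp only [Finset.card_univ, Fintype.card_fin]
    have : 2 ≤ n := by
      have := Finset.card_le_univ ({i, j} : Finset (Fin n))
      rwa [Finset.card_pair hij, Fintype.card_fin] at this
    omega
  · intro hmem
    obtain ⟨k, _, hk⟩ := Finset.mem_image.mp hmem
    have h1 : ({k} : Finset (Fin n)).card = 1 := Finset.card_singleton k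
    rw [hk, Finset.card_pair hij] at h1
    omega

lemma cycWt_swapElt_zero (hij : i ≠ j) :
    ∀ C ∈ cycles (swapElt i j a : GW m n), cycWt (swapElt i j a) C = 0 := by
  intro C hC
  rw [cycles_swapElt hij] at hC
  rcases Finset.mem_insert.mp hC with hC | hC
  · rw [hC, cycWt, Finset.sum_pair hij, swapElt_wt_i hij, swapElt_wt_j hij]
    ring
  · obtain ⟨k, hk, rfl⟩ := Finset.mem_image.mp hC
    simp only [Finset.mem_erase] at hk
    rw [cycWt, Finset.sum_singleton, swapElt_wt_other hk.2.1 hk.1]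

lemma isRefl_swapElt {p : ℕ} (hpm : p ∣ m) (hij : i ≠ j) :
    IsRefl p hpm (swapElt i j a) := by
  constructor
  · rw [Gmem, wtTot_eq_sum_cycWt]
    rw [Finset.sum_congr rfl (cycWt_swapElt_zero hij)]
    simp
  · rw [codimfix, c0]
    rw [Finset.filter_true_of_mem (cycWt_swapElt_zero hij)]
    rw [← numCycles, numCycles_swapElt hij]
    have : 2 ≤ n := by
      have := Finset.card_le_univ ({i, j} : Finset (Fin n))
      rwa [Finset.card_pair hij, Fintype.card_fin] at this
    omega

lemma swapElt_inv_apply (k : Fin n) : (swapElt i j a : GW m n).perm⁻¹ k = Equiv.swap i j k := by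
  rw [swapElt]
  simp

lemma swapElt_fixes (hm : 0 < m) (hij : i ≠ j) {v : Fin n → ℂ}
    (h : v i = E m a * v j) : (toMatrix (swapElt i j a)).mulVec v = v := by
  funext k
  rw [toMatrix_mulVec_apply hm, swapElt_inv_apply]
  by_cases hk : k = i
  · subst hk
    rw [Equiv.swap_apply_left, swapElt_wt_i hij, ← h]
  by_cases hk2 : k = j
  · subst hk2
    rw [Equiv.swap_apply_right, swapElt_wt_j hij, h, ← mul_assoc, ← E_add hm]
    rw [neg_add_cancel, E_zero hm, one_mul]
  · rw [Equiv.swap_apply_of_ne_of_ne hk hk2, swapElt_wt_other hk hk2, E_zero hm, one_mul]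

lemma swapElt_fix_imp (hm : 0 < m) (hij : i ≠ j) {v : Fin n → ℂ}
    (h : (toMatrix (swapElt i j a)).mulVec v = v) : v i = E m a * v j := by
  have h2 := congrFun h i
  rw [toMatrix_mulVec_apply hm, swapElt_inv_apply, Equiv.swap_apply_left,
    swapElt_wt_i hij] at h2
  exact h2.symm

end Swap
end GW


namespace GW
variable {m n : ℕ}

lemma c0_le_numCycles (w : GW m n) : c0 w ≤ numCycles w := Finset.card_filter_le _ _

lemma perm_apply_mem_cycleOf (w : GW m n) (i : Fin n) : w.perm i ∈ cycleOf w i :=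
  mem_cycleOf.mpr ⟨1, by simp⟩

lemma all_card_one_of_numCycles_eq {w : GW m n} (h : numCycles w = n) :
    ∀ C ∈ cycles w, C.card = 1 := by
  by_contra hcon
  push_neg at hcon
  obtain ⟨C₂, hC₂, hne⟩ := hcon
  have h1 : ∀ C ∈ cycles w, 1 ≤ C.card :=
    fun C hC => Finset.card_pos.mpr (nonempty_of_mem_cycles hC)
  have hlt : (∑ _C ∈ cycles w, 1) < ∑ C ∈ cycles w, C.card :=
    Finset.sum_lt_sum h1 ⟨C₂, hC₂, lt_of_le_of_ne (h1 _ hC₂) (Ne.symm hne)⟩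
  rw [sum_cycles_card, Finset.sum_const, smul_eq_mul, mul_one, ← numCycles, h] at hlt
  omega

lemma perm_eq_one_of_all_card_one {w : GW m n} (h : ∀ C ∈ cycles w, C.card = 1) :
    w.perm = 1 := by
  apply Equiv.ext
  intro i
  exact fixed_of_card_one (h _ (cycleOf_mem_cycles w i))

lemma refl_classify {t : GW m n} (h : codimfix t = 1) :
    (t.perm = 1 ∧ ∃ i0, t.wt i0 ≠ 0 ∧ ∀ k, k ≠ i0 → t.wt k = 0) ∨
    (∃ i j, i ≠ j ∧ t.perm = Equiv.swap i j ∧ t.wt i + t.wt j = 0 ∧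
      ∀ k, k ≠ i → k ≠ j → t.wt k = 0) := by
  classical
  have hc0n : c0 t ≤ n := le_trans (c0_le_numCycles t) (numCycles_le t)
  rw [codimfix] at h
  have hc0 : c0 t = n - 1 := by omega
  have hn1 : 1 ≤ n := by omega
  have hnum1 : 1 ≤ numCycles t := by
    have hne : (cycles t).Nonempty := ⟨cycleOf t ⟨0, hn1⟩, cycleOf_mem_cycles t _⟩
    exact Finset.card_pos.mpr hne
  have hnum_le := numCycles_le t
  have hge : c0 t ≤ numCycles t := c0_le_numCycles t
  by_cases hnn : numCycles t = n
  · left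
    have hall := all_card_one_of_numCycles_eq hnn
    have hperm := perm_eq_one_of_all_card_one hall
    refine ⟨hperm, ?_⟩
    have hfc := c0_of_perm_one hperm
    have hcompl : (Finset.univ.filter fun k => ¬ (t.wt k = 0)).card = 1 := by
      have hsplit := Finset.card_filter_add_card_filter_not
        (s := (Finset.univ : Finset (Fin n))) (p := fun k => t.wt k = 0)
      rw [Finset.card_univ, Fintype.card_fin] at hsplit
      omega
    obtain ⟨i0, hi0⟩ := Finset.card_eq_one.mp hcompl
    have hi0mem : i0 ∈ Finset.univ.filter fun k => ¬ (t.wt k = 0) := by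
      rw [hi0]; exact Finset.mem_singleton_self i0
    refine ⟨i0, (Finset.mem_filter.mp hi0mem).2, ?_⟩
    intro k hk
    by_contra hwk
    have : k ∈ Finset.univ.filter fun k => ¬ (t.wt k = 0) :=
      Finset.mem_filter.mpr ⟨Finset.mem_univ k, hwk⟩
    rw [hi0, Finset.mem_singleton] at this
    exact hk this
  · right
    have hnum2 : numCycles t = n - 1 := by omega
    have hallz : ∀ C ∈ cycles t, cycWt t C = 0 := by
      have hsub : (cycles t).filter (fun C => cycWt t C = 0) ⊆ cycles t :=
        Finset.filter_subset _ _
      have heq : (cycles t).filter (fun C => cycWt t C = 0) = cycles t :=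
        Finset.eq_of_subset_of_card_le hsub (by
          have hco : ((cycles t).filter fun C => cycWt t C = 0).card = c0 t := rfl
          have hnc : (cycles t).card = numCycles t := rfl
          omega)
      intro C hC
      rw [← heq] at hC
      exact (Finset.mem_filter.mp hC).2
    have h1 : ∀ C ∈ cycles t, 1 ≤ C.card :=
      fun C hC => Finset.card_pos.mpr (nonempty_of_mem_cycles hC)
    have hex : ∃ C₂ ∈ cycles t, 2 ≤ C₂.card := by
      by_contra hcon
      push_neg at hcon
      have hle : ∑ C ∈ cycles t, C.card ≤ ∑ _C ∈ cycles t, 1 :=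
        Finset.sum_le_sum (fun C hC => by have := hcon C hC; omega)
      rw [sum_cycles_card, Finset.sum_const, smul_eq_mul, mul_one, ← numCycles, hnum2] at hle
      omega
    obtain ⟨C₂, hC₂mem, hC₂2⟩ := hex
    have hsum : C₂.card + ∑ C ∈ (cycles t).erase C₂, C.card = n :=
      (Finset.add_sum_erase _ _ hC₂mem).trans (sum_cycles_card t)
    have herase_card : ((cycles t).erase C₂).card = n - 2 := by
      rw [Finset.card_erase_of_mem hC₂mem, ← numCycles, hnum2]
      omega
    have herase_ge : ((cycles t).erase C₂).card ≤ ∑ C ∈ (cycles t).erase C₂, C.card := by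
      calc ((cycles t).erase C₂).card = ∑ _C ∈ (cycles t).erase C₂, 1 := by
            rw [Finset.sum_const, smul_eq_mul, mul_one]
        _ ≤ _ := Finset.sum_le_sum (fun C hC => h1 C (Finset.mem_of_mem_erase hC))
    have hcard2 : C₂.card = 2 := by omega
    have hsum_erase : ∑ C ∈ (cycles t).erase C₂, C.card = n - 2 := by omega
    have hall1 : ∀ C ∈ (cycles t).erase C₂, C.card = 1 := by
      by_contra hcon
      push_neg at hcon
      obtain ⟨D, hD, hDne⟩ := hcon
      have hlt : (∑ _C ∈ (cycles t).erase C₂, 1) < ∑ C ∈ (cycles t).erase C₂, C.card :=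
        Finset.sum_lt_sum (fun C hC => h1 C (Finset.mem_of_mem_erase hC))
          ⟨D, hD, lt_of_le_of_ne (h1 _ (Finset.mem_of_mem_erase hD)) (Ne.symm hDne)⟩
      rw [Finset.sum_const, smul_eq_mul, mul_one] at hlt
      omega
    obtain ⟨i, j, hij, hC₂eq⟩ := Finset.card_eq_two.mp hcard2
    have hCi : cycleOf t i = C₂ := by
      obtain ⟨k0, hk0⟩ := mem_cycles.mp hC₂mem
      rw [hk0]
      apply cycleOf_eq_of_mem
      rw [← hk0, hC₂eq]
      exact Finset.mem_insert_self _ _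
    have hCj : cycleOf t j = C₂ := by
      obtain ⟨k0, hk0⟩ := mem_cycles.mp hC₂mem
      rw [hk0]
      apply cycleOf_eq_of_mem
      rw [← hk0, hC₂eq]
      exact Finset.mem_insert_of_mem (Finset.mem_singleton_self _)
    have hpnei : t.perm i ≠ i := by
      intro hf
      have h2 := cycleOf_of_fixed hf
      rw [hCi, hC₂eq] at h2
      have : ({i, j} : Finset (Fin n)).card = 1 := by rw [h2]; rfl
      rw [Finset.card_pair hij] at this
      omega
    have hpi : t.perm i = j := by
      have hmem := perm_apply_mem_cycleOf t i
      rw [hCi, hC₂eq] at hmem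
      rcases Finset.mem_insert.mp hmem with h2 | h2
      · exact absurd h2 hpnei
      · exact Finset.mem_singleton.mp h2
    have hpnej : t.perm j ≠ j := by
      intro hf
      have h2 := cycleOf_of_fixed hf
      rw [hCj, hC₂eq] at h2
      have : ({i, j} : Finset (Fin n)).card = 1 := by rw [h2]; rfl
      rw [Finset.card_pair hij] at this
      omega
    have hpj : t.perm j = i := by
      have hmem := perm_apply_mem_cycleOf t j
      rw [hCj, hC₂eq] at hmem
      rcases Finset.mem_insert.mp hmem with h2 | h2
      · exact h2
      · exact absurd (Finset.mem_singleton.mp h2) hpnej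
    have hfix : ∀ k, k ≠ i → k ≠ j → t.perm k = k := by
      intro k hki hkj
      have hkC : cycleOf t k ≠ C₂ := by
        intro hf
        have : k ∈ C₂ := by rw [← hf]; exact self_mem_cycleOf t k
        rw [hC₂eq] at this
        rcases Finset.mem_insert.mp this with h2 | h2
        · exact hki h2
        · exact hkj (Finset.mem_singleton.mp h2)
      exact fixed_of_card_one
        (hall1 _ (Finset.mem_erase.mpr ⟨hkC, cycleOf_mem_cycles t k⟩))
    refine ⟨i, j, hij, ?_, ?_, ?_⟩
    · apply Equiv.ext
      intro k
      by_cases hk : k = i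
      · rw [hk, hpi, Equiv.swap_apply_left]
      by_cases hk2 : k = j
      · rw [hk2, hpj, Equiv.swap_apply_right]
      · rw [hfix k hk hk2, Equiv.swap_apply_of_ne_of_ne hk hk2]
    · have h2 := hallz C₂ hC₂mem
      rw [hC₂eq, cycWt, Finset.sum_pair hij] at h2
      exact h2
    · intro k hki hkj
      have h2 := hallz (cycleOf t k) (cycleOf_mem_cycles t k)
      rw [cycleOf_of_fixed (hfix k hki hkj), cycWt, Finset.sum_singleton] at h2
      exact h2

lemma isRegularVec_of_inj_p_lt {p : ℕ} (hm : 0 < m) (hplt : p < m) (hpm : p ∣ m)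
    {v : Fin n → ℂ} (hinj : Function.Injective fun i => (v i)^m) (hnz : ∀ i, v i ≠ 0) :
    IsRegularVec p hpm v := by
  rintro t ⟨hG, hcod⟩ hfix
  rcases refl_classify hcod with ⟨hperm, i0, hi0, _⟩ | ⟨i, j, hij, hperm, hsum, hother⟩
  · have h2 := congrFun hfix i0
    rw [toMatrix_mulVec_apply hm] at h2
    have hp1 : t.perm⁻¹ i0 = i0 := by rw [hperm]; rfl
    rw [hp1] at h2
    have hE : E m (t.wt i0) = 1 := mul_right_cancel₀ (hnz i0) (by rw [h2, one_mul])
    exact hi0 ((E_eq_one_iff hm _).mp hE)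
  · have h2 := congrFun hfix i
    rw [toMatrix_mulVec_apply hm, hperm] at h2
    rw [show (Equiv.swap i j)⁻¹ = Equiv.swap i j from Equiv.swap_inv i j,
      Equiv.swap_apply_left] at h2
    have hpow : (v i)^m = (v j)^m := by
      rw [← h2, mul_pow, E_pow_m hm, one_mul]
    exact hij (hinj hpow)

lemma isRegularVec_of_inj_p_eq (hm : 0 < m) {v : Fin n → ℂ}
    (hinj : Function.Injective fun i => (v i)^m) :
    IsRegularVec m (dvd_refl m) v := by
  rintro t ⟨hG, hcod⟩ hfix
  rcases refl_classify hcod with ⟨hperm, i0, hi0, hothers⟩ | ⟨i, j, hij, hperm, hsum, hother⟩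
  · have hw : wtTot t = t.wt i0 := by
      rw [wtTot]
      exact Finset.sum_eq_single i0 (fun k _ hk => hothers k hk)
        (fun hk => absurd (Finset.mem_univ _) hk)
    rw [Gmem, ZMod.castHom_self] at hG
    simp only [RingHom.id_apply] at hG
    rw [hw] at hG
    exact hi0 hG
  · have h2 := congrFun hfix i
    rw [toMatrix_mulVec_apply hm, hperm] at h2
    rw [show (Equiv.swap i j)⁻¹ = Equiv.swap i j from Equiv.swap_inv i j,
      Equiv.swap_apply_left] at h2
    have hpow : (v i)^m = (v j)^m := by
      rw [← h2, mul_pow, E_pow_m hm, one_mul]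
    exact hij (hinj hpow)

lemma inj_of_isRegularVec (hm : 0 < m) {p : ℕ} {hpm : p ∣ m} {v : Fin n → ℂ}
    (hreg : IsRegularVec p hpm v) :
    Function.Injective fun i => (v i)^m := by
  intro i j hij2
  by_contra hne
  simp only at hij2
  have hex : ∃ a : ZMod m, v i = E m a * v j := by
    by_cases hvj : v j = 0
    · have hvi : v i = 0 := by
        have h0 : (v i)^m = 0 := by rw [hij2, hvj, zero_pow hm.ne']
        exact pow_eq_zero_iff hm.ne' |>.mp h0
      exact ⟨0, by rw [E_zero hm, one_mul, hvi, hvj]⟩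
    · have hx : (v i / v j)^m = 1 := by
        rw [div_pow, hij2, div_self (pow_ne_zero m hvj)]
      obtain ⟨s, hs, hxe⟩ := exists_ec_of_pow_eq_one hm hx
      refine ⟨((s : ℕ) : ZMod m), ?_⟩
      rw [E_natCast hm, ← hxe]
      field_simp
  obtain ⟨a, ha⟩ := hex
  exact hreg (swapElt i j a) (isRefl_swapElt hpm hne) (swapElt_fixes hm hne ha)

lemma nonzero_of_isRegularVec (hm : 0 < m) {p : ℕ} (hp : 0 < p) (hplt : p < m)
    {hpm : p ∣ m} {v : Fin n → ℂ} (hreg : IsRegularVec p hpm v) : ∀ i, v i ≠ 0 := by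
  intro i0 hv
  exact hreg (diagElt i0 ((p:ℕ) : ZMod m)) (isRefl_diag hp hplt hpm i0)
    (diag_fixes hm i0 _ v hv)

end GW


section ProdShift

lemma prod_range_shift {M : Type*} [CommMonoid M] (g : ℕ → M) (d : ℕ) (hd : 0 < d) :
    ∏ l ∈ Finset.range d, g ((l+1) % d) = ∏ l ∈ Finset.range d, g l := by
  apply Finset.prod_bij' (i := fun l _ => (l+1) % d) (j := fun l _ => (l + (d-1)) % d)
  · intro a ha
    exact Finset.mem_range.mpr (Nat.mod_lt _ hd)
  · intro a ha
    exact Finset.mem_range.mpr (Nat.mod_lt _ hd)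
  · intro a ha
    have ha' := Finset.mem_range.mp ha
    have h1 : ((a+1) % d + (d-1)) % d = ((a+1) + (d-1)) % d := Nat.mod_add_mod _ _ _
    have h2 : (a+1) + (d-1) = a + d := by omega
    rw [h1, h2, Nat.add_mod_right, Nat.mod_eq_of_lt ha']
  · intro a ha
    have ha' := Finset.mem_range.mp ha
    have h1 : ((a + (d-1)) % d + 1) % d = ((a + (d-1)) + 1) % d := Nat.mod_add_mod _ _ _
    have h2 : (a + (d-1)) + 1 = a + d := by omega
    rw [h1, h2, Nat.add_mod_right, Nat.mod_eq_of_lt ha']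
  · intro a ha
    rfl

end ProdShift

namespace GW
variable {m n : ℕ}

lemma E_sum (hm : 0 < m) {α : Type*} (S : Finset α) (f : α → ZMod m) :
    E m (∑ a ∈ S, f a) = ∏ a ∈ S, E m (f a) := by
  classical
  induction S using Finset.cons_induction with
  | empty => simp [E_zero hm]
  | cons a S ha ih => rw [Finset.sum_cons, Finset.prod_cons, E_add hm, ih]

variable {w : GW m n} {v : Fin n → ℂ} {c : ℂ}

lemma nz_step (hm : 0 < m) (heig : (toMatrix w).mulVec v = c • v) (i : Fin n)
    (hvi : v i ≠ 0) : v (w.perm i) ≠ 0 := by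
  have h := eigen_step hm heig i
  intro h0
  rw [h0, mul_zero] at h
  exact (mul_ne_zero (E_ne_zero m _) hvi) h

lemma nz_pow (hm : 0 < m) (heig : (toMatrix w).mulVec v = c • v) (i : Fin n)
    (hvi : v i ≠ 0) : ∀ k, v ((w.perm ^ k) i) ≠ 0 := by
  intro k
  induction k with
  | zero => simpa using hvi
  | succ k ih =>
      rw [pow_succ', Equiv.Perm.mul_apply]
      exact nz_step hm heig _ ih

lemma pow_m_rel (hm : 0 < m) (heig : (toMatrix w).mulVec v = c • v) (i : Fin n) :
    ∀ k, c^(m*k) * (v ((w.perm ^ k) i))^m = (v i)^m := by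
  intro k
  induction k with
  | zero => simp
  | succ k ih =>
      have hp : (w.perm ^ (k+1)) i = w.perm ((w.perm ^ k) i) := by
        rw [pow_succ', Equiv.Perm.mul_apply]
      have hs := eigen_step hm heig ((w.perm ^ k) i)
      have h3 := congrArg (fun z => z^m) hs
      simp only [mul_pow] at h3
      rw [E_pow_m hm, one_mul] at h3
      calc c^(m*(k+1)) * (v ((w.perm ^ (k+1)) i))^m
          = c^(m*k) * (c^m * (v (w.perm ((w.perm ^ k) i)))^m) := by rw [hp]; ring
        _ = c^(m*k) * (v ((w.perm ^ k) i))^m := by rw [← h3]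
        _ = (v i)^m := ih

lemma prod_formula (hm : 0 < m) (heig : (toMatrix w).mulVec v = c • v) (i : Fin n) :
    ∀ k, (∏ l ∈ Finset.range k, E m (w.wt ((w.perm ^ (l+1)) i))) * v i
      = c^k * v ((w.perm ^ k) i) := by
  intro k
  induction k with
  | zero => simp
  | succ k ih =>
      rw [Finset.prod_range_succ]
      have hs := eigen_step hm heig ((w.perm ^ k) i)
      have hp : (w.perm ^ (k+1)) i = w.perm ((w.perm ^ k) i) := by
        rw [pow_succ', Equiv.Perm.mul_apply]
      calc (∏ l ∈ Finset.range k, E m (w.wt ((w.perm ^ (l+1)) i)))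
            * E m (w.wt ((w.perm ^ (k+1)) i)) * v i
          = E m (w.wt ((w.perm ^ (k+1)) i))
            * ((∏ l ∈ Finset.range k, E m (w.wt ((w.perm ^ (l+1)) i))) * v i) := by ring
        _ = E m (w.wt ((w.perm ^ (k+1)) i)) * (c^k * v ((w.perm ^ k) i)) := by rw [ih]
        _ = c^k * (E m (w.wt (w.perm ((w.perm ^ k) i))) * v ((w.perm ^ k) i)) := by
              rw [hp]; ring
        _ = c^k * (c * v (w.perm ((w.perm ^ k) i))) := by rw [hs]
        _ = c^(k+1) * v ((w.perm ^ (k+1)) i) := by rw [hp]; ring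

lemma analysis (hm : 0 < m) (heig : (toMatrix w).mulVec v = c • v)
    (hinj : Function.Injective fun i => (v i)^m)
    {i₀ : Fin n} (hi₀ : v i₀ ≠ 0) :
    ∃ d s : ℕ, 0 < d ∧ Nat.Coprime s d ∧ s < m * d ∧ c = ec ((s:ℚ)/(m*d)) ∧
      (∀ C ∈ cycles w, (∃ i ∈ C, v i ≠ 0) →
        C.card = d ∧ cycWt w C = ((s:ℕ) : ZMod m)) := by
  haveI : NeZero m := ⟨hm.ne'⟩
  have hchar : ∀ i : Fin n, v i ≠ 0 → ∀ k, (c^(m*k) = 1 ↔ per w i ∣ k) := by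
    intro i hvi k
    have hfne : (v i)^m ≠ 0 := pow_ne_zero _ hvi
    have hper1 : c^(m * per w i) = 1 := by
      have h2 := pow_m_rel hm heig i (per w i)
      rw [pow_per_apply] at h2
      exact mul_right_cancel₀ hfne (h2.trans (one_mul _).symm)
    constructor
    · intro h1
      have hk : m*k = m*(k % per w i) + (m*per w i)*(k/per w i) := by
        have := Nat.div_add_mod k (per w i)
        calc m*k = m*(per w i*(k/per w i) + k % per w i) := by rw [this]
          _ = m*(k % per w i) + (m*per w i)*(k/per w i) := by ring
      have hmod : c^(m * (k % per w i)) = 1 := by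
        have h3 : c^(m*(k % per w i)) * (c^(m*per w i))^(k/per w i) = c^(m*k) := by
          rw [← pow_mul, ← pow_add, ← hk]
        rw [h1, hper1, one_pow, mul_one] at h3
        exact h3
      by_contra hnd
      have hpos : 0 < k % per w i :=
        Nat.pos_of_ne_zero (fun h0 => hnd (Nat.dvd_of_mod_eq_zero h0))
      have hlt : k % per w i < per w i := Nat.mod_lt _ (per_pos w i)
      have h2 := pow_m_rel hm heig i (k % per w i)
      rw [hmod, one_mul] at h2
      have heq : (w.perm ^ (k % per w i)) i = i := hinj h2
      have hdvd := (pow_apply_eq_self_iff w _ i).mp heq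
      have := Nat.le_of_dvd hpos hdvd
      omega
    · intro hdvd
      obtain ⟨q, rfl⟩ := hdvd
      rw [show m*(per w i*q) = (m*per w i)*q by ring, pow_mul, hper1, one_pow]
  have hd0 : 0 < per w i₀ := per_pos w i₀
  set d := per w i₀ with hdd
  have hcd : c^(m*d) = 1 := (hchar i₀ hi₀ d).mpr dvd_rfl
  have hmd : 0 < m*d := Nat.mul_pos hm hd0
  obtain ⟨σ, hσlt, hσ⟩ := exists_ec_of_pow_eq_one hmd hcd
  have huni : ∀ i : Fin n, v i ≠ 0 → per w i = d := by
    intro i hvi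
    have h1 : per w i ∣ d := (hchar i hvi d).mp hcd
    have h2 : d ∣ per w i := (hchar i₀ hi₀ (per w i)).mp ((hchar i hvi (per w i)).mpr dvd_rfl)
    exact Nat.dvd_antisymm h1 h2
  refine ⟨d, σ, hd0, ?_, ?_, ?_, ?_⟩
  · -- coprime
    set e := Nat.gcd σ d with hee
    have hed : e ∣ d := Nat.gcd_dvd_right σ d
    have heσ : e ∣ σ := Nat.gcd_dvd_left σ d
    have hepos : 0 < e := Nat.gcd_pos_of_pos_right σ hd0
    have hk : c^(m * (d/e)) = 1 := by
      rw [hσ, ec_pow, ec_eq_one_iff]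
      refine ⟨((σ/e : ℕ) : ℤ), ?_⟩
      have he' : (e:ℚ) ≠ 0 := Nat.cast_ne_zero.mpr hepos.ne'
      have hm' : (m:ℚ) ≠ 0 := Nat.cast_ne_zero.mpr hm.ne'
      have hd' : (d:ℚ) ≠ 0 := Nat.cast_ne_zero.mpr hd0.ne'
      have hcast : (((σ/e : ℕ) : ℤ) : ℚ) = (σ:ℚ)/e := by
        rw [Int.cast_natCast, Nat.cast_div heσ he']
      rw [hcast, Nat.cast_mul, Nat.cast_div hed he']
      field_simp
      push_cast; ring
    have hdvd2 : d ∣ d/e := (hchar i₀ hi₀ _).mp hk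
    have hpos2 : 0 < d/e := Nat.div_pos (Nat.le_of_dvd hd0 hed) hepos
    have hle1 : d ≤ d/e := Nat.le_of_dvd hpos2 hdvd2
    have hle2 : d/e ≤ d := Nat.div_le_self d e
    have hde : d/e = d := le_antisymm hle2 hle1
    have hmul : d * e = d * 1 := by
      rw [mul_one]
      calc d * e = (d/e) * e := by rw [hde]
        _ = d := Nat.div_mul_cancel hed
    exact Nat.eq_of_mul_eq_mul_left hd0 hmul
  · exact hσlt
  · rw [hσ]; push_cast; ring_nf
  · intro C hC hex
    obtain ⟨i, hiC, hvi⟩ := hex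
    have hCeq : C = cycleOf w i := by
      obtain ⟨k0, hk0⟩ := mem_cycles.mp hC
      rw [hk0]
      exact (cycleOf_eq_of_mem (hk0 ▸ hiC)).symm
    have hper_i : per w i = d := huni i hvi
    constructor
    · rw [hCeq, card_cycleOf, hper_i]
    · have hdi : (w.perm ^ d) i = i :=
        (pow_apply_eq_self_iff w d i).mpr (hper_i ▸ dvd_rfl)
      have hprod := prod_formula hm heig i d
      rw [hdi] at hprod
      have hEprod : (∏ l ∈ Finset.range d, E m (w.wt ((w.perm ^ (l+1)) i))) = c^d :=
        mul_right_cancel₀ hvi hprod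
      have hE1 : E m (cycWt w C) = ∏ j ∈ C, E m (w.wt j) := E_sum hm C w.wt
      have hE2 : ∏ j ∈ C, E m (w.wt j)
          = ∏ l ∈ Finset.range d, E m (w.wt ((w.perm ^ l) i)) := by
        rw [hCeq, cycleOf_eq_image, hper_i]
        rw [Finset.prod_image]
        intro a ha b hb hab
        exact pow_apply_inj (hper_i ▸ Finset.mem_range.mp ha)
          (hper_i ▸ Finset.mem_range.mp hb) hab
      have hE3 : ∏ l ∈ Finset.range d, E m (w.wt ((w.perm ^ l) i))
          = ∏ l ∈ Finset.range d, E m (w.wt ((w.perm ^ (l+1)) i)) := by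
        rw [← prod_range_shift (fun l => E m (w.wt ((w.perm ^ l) i))) d hd0]
        apply Finset.prod_congr rfl
        intro l _
        have hmod : (w.perm ^ ((l+1) % per w i)) i = (w.perm ^ (l+1)) i :=
          pow_apply_mod w (l+1) i
        rw [hper_i] at hmod
        simp only [hmod]
      have hcd2 : c^d = ec ((σ:ℚ)/m) := by
        rw [hσ, ec_pow]
        congr 1
        have hm' : (m:ℚ) ≠ 0 := Nat.cast_ne_zero.mpr hm.ne'
        have hd' : (d:ℚ) ≠ 0 := Nat.cast_ne_zero.mpr hd0.ne'
        push_cast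
        field_simp
      have hEc : E m (cycWt w C) = ec ((σ:ℚ)/m) := by
        rw [hE1, hE2, hE3, hEprod, hcd2]
      rw [E, ec_eq_ec_iff] at hEc
      obtain ⟨z, hz⟩ := hEc
      have hcong : ((cycWt w C).val : ZMod m) = ((σ:ℕ) : ZMod m) := by
        rw [ZMod.natCast_eq_natCast_iff]
        rw [Nat.modEq_iff_dvd]
        refine ⟨-z, ?_⟩
        have hm' : (m:ℚ) ≠ 0 := Nat.cast_ne_zero.mpr hm.ne'
        have hq : ((cycWt w C).val : ℚ) - σ = z * m := by
          have h4 := congrArg (fun x : ℚ => x * m) hz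
          simp only [sub_mul] at h4
          rw [div_mul_cancel₀ _ hm', div_mul_cancel₀ _ hm'] at h4
          exact h4
        have : ((σ:ℤ) - ((cycWt w C).val : ℤ) : ℚ) = ((m * (-z) : ℤ) : ℚ) := by
          push_cast
          linarith
        exact_mod_cast this
      rw [← ZMod.natCast_zmod_val (cycWt w C), hcong]

end GW


namespace GW
variable {m n : ℕ}

lemma cycleOf_apply (w : GW m n) (i : Fin n) : cycleOf w (w.perm i) = cycleOf w i :=
  cycleOf_eq_of_mem (perm_apply_mem_cycleOf w i)

lemma per_eq_of_mem_cycleOf {w : GW m n} {i j : Fin n} (h : j ∈ cycleOf w i) :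
    per w j = per w i := by
  obtain ⟨l, _, hleq⟩ := sameCycle_iff_exists_pow_lt_per.mp (mem_cycleOf.mp h)
  rw [← hleq, per_pow_apply]

lemma abs_E (m : ℕ) (a : ZMod m) : ‖E m a‖ = 1 := abs_ec _

lemma construction (hm : 0 < m) (w : GW m n) (q : ℚ) (S : Finset (Finset (Fin n)))
    (hS : S ⊆ cycles w)
    (hSsmall : ∀ C ∈ S, ∀ D ∈ S, ∀ i ∈ C, ∀ j ∈ D, i = j)
    (hgood : ∀ C ∈ cycles w, C ∉ S →
      ((ec q) ^ C.card = E m (cycWt w C) ∧ ∀ k, 0 < k → k < C.card → (ec q)^(m*k) ≠ 1)) :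
    ∃ v : Fin n → ℂ, (∀ i, (v i = 0 ↔ cycleOf w i ∈ S)) ∧
      (toMatrix w).mulVec v = (ec q) • v ∧ Function.Injective fun i => (v i)^m := by
  classical
  set b : Fin n → Fin n := fun i => (cycleOf w i).min' ⟨i, self_mem_cycleOf w i⟩ with hb
  have hbmem : ∀ i, b i ∈ cycleOf w i := fun i => Finset.min'_mem _ _
  have hbcyc : ∀ i, cycleOf w (b i) = cycleOf w i := fun i => cycleOf_eq_of_mem (hbmem i)
  have hbeq : ∀ i j, cycleOf w i = cycleOf w j → b i = b j := by
    intro i j hij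
    simp only [hb, hij]
  have hper_b : ∀ i, per w (b i) = per w i := fun i => per_eq_of_mem_cycleOf (hbmem i)
  have hex : ∀ i : Fin n, ∃ l, l < per w (b i) ∧ (w.perm ^ l) (b i) = i := by
    intro i
    have hmem : i ∈ cycleOf w (b i) := by rw [hbcyc]; exact self_mem_cycleOf w i
    obtain ⟨l, hl1, hl2⟩ := sameCycle_iff_exists_pow_lt_per.mp (mem_cycleOf.mp hmem)
    exact ⟨l, hl1, hl2⟩
  choose kk hklt hkeq using hex
  set v : Fin n → ℂ := fun i =>
    if cycleOf w i ∈ S then 0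
    else ((2^(b i).val : ℕ) : ℂ) * ((ec q)⁻¹)^(kk i)
      * ∏ l ∈ Finset.range (kk i), E m (w.wt ((w.perm ^ (l+1)) (b i))) with hvdef
  have hvS : ∀ i, cycleOf w i ∈ S → v i = 0 := by
    intro i h
    simp only [hvdef, if_pos h]
  have hvN : ∀ i, cycleOf w i ∉ S → v i = ((2^(b i).val : ℕ) : ℂ) * ((ec q)⁻¹)^(kk i)
      * ∏ l ∈ Finset.range (kk i), E m (w.wt ((w.perm ^ (l+1)) (b i))) := by
    intro i h
    simp only [hvdef, if_neg h]
  have hvne : ∀ i, cycleOf w i ∉ S → v i ≠ 0 := by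
    intro i h
    rw [hvN i h]
    apply mul_ne_zero
    apply mul_ne_zero
    · exact Nat.cast_ne_zero.mpr (pow_ne_zero _ two_ne_zero)
    · exact pow_ne_zero _ (inv_ne_zero (ec_ne_zero q))
    · exact Finset.prod_ne_zero_iff.mpr (fun l _ => E_ne_zero m _)
  have hv0iff : ∀ i, (v i = 0 ↔ cycleOf w i ∈ S) := by
    intro i
    constructor
    · intro h
      by_contra hc
      exact hvne i hc h
    · exact hvS i
  -- the step relation
  have hstep : ∀ i, E m (w.wt (w.perm i)) * v i = ec q * v (w.perm i) := by
    intro i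
    by_cases hCS : cycleOf w i ∈ S
    · rw [hvS i hCS, hvS (w.perm i) (by rw [cycleOf_apply]; exact hCS)]
      ring
    · have hSui : cycleOf w (w.perm i) ∉ S := by rw [cycleOf_apply]; exact hCS
      have hbui : b (w.perm i) = b i := hbeq _ _ (cycleOf_apply w i)
      have hk1 : (w.perm ^ (kk i + 1)) (b i) = w.perm i := by
        rw [pow_succ', Equiv.Perm.mul_apply, hkeq i]
      have hecne := ec_ne_zero q
      by_cases hcase : kk i + 1 < per w (b i)
      · -- generic step inside the cycle
        have he1 : (w.perm ^ kk (w.perm i)) (b i) = (w.perm ^ (kk i + 1)) (b i) := by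
          calc (w.perm ^ kk (w.perm i)) (b i)
              = (w.perm ^ kk (w.perm i)) (b (w.perm i)) := by rw [hbui]
            _ = w.perm i := hkeq (w.perm i)
            _ = (w.perm ^ (kk i + 1)) (b i) := hk1.symm
        have hkui : kk (w.perm i) = kk i + 1 :=
          pow_apply_inj (hbui ▸ hklt (w.perm i)) hcase he1
        rw [hvN i hCS, hvN (w.perm i) hSui, hbui, hkui]
        rw [Finset.prod_range_succ, hk1]
        field_simp
        have hx : ec q * (1 / ec q) = 1 := mul_one_div_cancel hecne
        linear_combination (-(E m (w.wt (w.perm i)) * (∏ l ∈ Finset.range (kk i), E m (w.wt ((w.perm ^ (l + 1)) (b i)))) * (1 / ec q) ^ kk i)) * hx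
      · -- wrap-around step
        have hcase' : kk i + 1 = per w (b i) := by
          have := hklt i
          omega
        have hui_b : w.perm i = b i := by
          rw [← hk1, hcase']
          rw [perm_pow_apply]
          exact Function.iterate_minimalPeriod
        have hkui : kk (w.perm i) = 0 := by
          have h0 : (w.perm ^ kk (w.perm i)) (b i) = b i := by
            calc (w.perm ^ kk (w.perm i)) (b i)
                = (w.perm ^ kk (w.perm i)) (b (w.perm i)) := by rw [hbui]
              _ = w.perm i := hkeq (w.perm i)
              _ = b i := hui_b
          have hdvd := (pow_apply_eq_self_iff w _ (b i)).mp h0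
          have hlt := hklt (w.perm i)
          rw [hbui] at hlt
          rcases Nat.eq_zero_or_pos (kk (w.perm i)) with h | h
          · exact h
          · have := Nat.le_of_dvd h hdvd
            omega
        have hgoodC := hgood (cycleOf w i) (cycleOf_mem_cycles w i) hCS
        have hcard : (cycleOf w i).card = kk i + 1 := by
          rw [card_cycleOf, ← hper_b, ← hcase']
        have hpow_eq : (ec q) ^ (kk i + 1) = E m (cycWt w (cycleOf w i)) := by
          rw [← hcard]; exact hgoodC.1
        -- expand E (cycWt) as a product over the cycle
        have hE1 : E m (cycWt w (cycleOf w i)) = ∏ j ∈ cycleOf w i, E m (w.wt j) :=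
          E_sum hm _ _
        have hE2 : ∏ j ∈ cycleOf w i, E m (w.wt j)
            = ∏ l ∈ Finset.range (kk i + 1), E m (w.wt ((w.perm ^ l) (b i))) := by
          rw [← hbcyc i, cycleOf_eq_image, ← hcase']
          rw [Finset.prod_image]
          intro a ha b' hb' hab
          exact pow_apply_inj
            (by rw [← hcase']; exact Finset.mem_range.mp ha)
            (by rw [← hcase']; exact Finset.mem_range.mp hb') hab
        have hE3 : ∏ l ∈ Finset.range (kk i + 1), E m (w.wt ((w.perm ^ l) (b i)))
            = (∏ l ∈ Finset.range (kk i), E m (w.wt ((w.perm ^ (l+1)) (b i))))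
              * E m (w.wt (b i)) := by
          rw [Finset.prod_range_succ']
          simp
        have hkey : (ec q) ^ (kk i + 1)
            = (∏ l ∈ Finset.range (kk i), E m (w.wt ((w.perm ^ (l+1)) (b i))))
              * E m (w.wt (b i)) := by
          rw [hpow_eq, hE1, hE2, hE3]
        rw [hvN i hCS, hvN (w.perm i) hSui, hbui, hkui, hui_b]
        simp only [Finset.range_zero, Finset.prod_empty, pow_zero, mul_one]
        have hstep2 : (ec q)⁻¹ ^ kk i
            * ((∏ l ∈ Finset.range (kk i), E m (w.wt ((w.perm ^ (l+1)) (b i))))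
              * E m (w.wt (b i))) = ec q := by
          rw [← hkey, pow_succ, inv_pow]
          exact inv_mul_cancel_left₀ (pow_ne_zero _ hecne) _
        calc E m (w.wt (b i)) * (((2^(b i).val : ℕ) : ℂ) * (ec q)⁻¹ ^ kk i
              * ∏ l ∈ Finset.range (kk i), E m (w.wt ((w.perm ^ (l+1)) (b i))))
            = ((2^(b i).val : ℕ) : ℂ) * ((ec q)⁻¹ ^ kk i
              * ((∏ l ∈ Finset.range (kk i), E m (w.wt ((w.perm ^ (l+1)) (b i))))
                * E m (w.wt (b i)))) := by ring
          _ = ((2^(b i).val : ℕ) : ℂ) * ec q := by rw [hstep2]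
          _ = ec q * ((2^(b i).val : ℕ) : ℂ) := by ring
  have heig : (toMatrix w).mulVec v = (ec q) • v := by
    rw [eigen_iff hm]
    intro i
    have h2 := hstep (w.perm⁻¹ i)
    rw [show w.perm (w.perm⁻¹ i) = i from w.perm.apply_symm_apply i] at h2
    exact h2
  refine ⟨v, hv0iff, heig, ?_⟩
  -- injectivity of i ↦ v i ^ m
  intro i j hfij
  simp only at hfij
  by_cases hSi : cycleOf w i ∈ S <;> by_cases hSj : cycleOf w j ∈ S
  · exact hSsmall _ hSi _ hSj i (self_mem_cycleOf w i) j (self_mem_cycleOf w j)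
  · exfalso
    rw [hvS i hSi] at hfij
    exact pow_ne_zero m (hvne j hSj) (by rw [← hfij, zero_pow hm.ne'])
  · exfalso
    rw [hvS j hSj] at hfij
    exact pow_ne_zero m (hvne i hSi) (by rw [hfij, zero_pow hm.ne'])
  · -- both nonzero
    have hfm : ∀ i', cycleOf w i' ∉ S →
        v i' ^ m = ((2^(b i').val : ℕ) : ℂ)^m * (((ec q) ^ (m * kk i'))⁻¹) := by
      intro i' h
      rw [hvN i' h, mul_pow, mul_pow]
      have hP : (∏ l ∈ Finset.range (kk i'), E m (w.wt ((w.perm ^ (l+1)) (b i'))))^m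
          = 1 := by
        rw [← Finset.prod_pow]
        apply Finset.prod_eq_one
        intro l _
        exact E_pow_m hm _
      rw [hP, mul_one]
      congr 1
      rw [← pow_mul, inv_pow, mul_comm (kk i') m]
    rw [hfm i hSi, hfm j hSj] at hfij
    -- moduli
    have habs : ∀ i', ‖((((2:ℕ)^(b i').val : ℕ) : ℂ)^m
        * (((ec q) ^ (m * kk i'))⁻¹))‖ = ((2^(b i').val : ℕ) : ℝ)^m := by
      intro i'
      rw [norm_mul, norm_pow, Complex.norm_natCast, norm_inv, norm_pow, abs_ec]
      simp
    have habs_eq := congrArg norm hfij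
    rw [habs, habs] at habs_eq
    have hxnat : ((2:ℕ)^(b i).val)^m = ((2:ℕ)^(b j).val)^m := by
      exact_mod_cast habs_eq
    rw [← pow_mul, ← pow_mul] at hxnat
    have hbij_val : (b i).val = (b j).val := by
      have := Nat.pow_right_injective (le_refl 2) hxnat
      exact Nat.eq_of_mul_eq_mul_right hm this
    have hbij : b i = b j := Fin.val_injective hbij_val
    have hCij : cycleOf w i = cycleOf w j := by
      rw [← hbcyc i, ← hbcyc j, hbij]
    -- cancel x-part
    have hxne : (((2:ℕ)^(b i).val : ℕ) : ℂ)^m ≠ 0 := by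
      apply pow_ne_zero
      apply Nat.cast_ne_zero.mpr
      positivity
    rw [hbij] at hfij
    have hinv_eq : ((ec q) ^ (m * kk i))⁻¹ = ((ec q) ^ (m * kk j))⁻¹ :=
      mul_left_cancel₀ (hbij ▸ hxne) hfij
    have hpow_eq : (ec q) ^ (m * kk i) = (ec q) ^ (m * kk j) := by
      rw [← inv_inv ((ec q) ^ (m * kk i)), hinv_eq, inv_inv]
    -- same period
    have hperij : per w j = per w i :=
      per_eq_of_mem_cycleOf (by rw [hCij]; exact self_mem_cycleOf w j)
    have hgoodC := hgood (cycleOf w i) (cycleOf_mem_cycles w i) hSi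
    have hcardC : (cycleOf w i).card = per w i := card_cycleOf w i
    have hklti : kk i < per w i := by rw [← hper_b]; exact hklt i
    have hkltj : kk j < per w i := by rw [← hperij, ← hper_b]; exact hklt j
    have hkk : kk i = kk j := by
      rcases le_total (kk i) (kk j) with hle | hle
      · by_contra hne
        have hpos : 0 < kk j - kk i := by omega
        have hsplit : m * kk i + m * (kk j - kk i) = m * kk j := by
          rw [← Nat.mul_add, Nat.add_sub_cancel' hle]
        have h5 : (ec q) ^ (m * kk i) * (ec q) ^ (m * (kk j - kk i))
            = (ec q) ^ (m * kk i) * 1 := by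
          rw [mul_one, ← pow_add, hsplit, hpow_eq]
        have h6 := mul_left_cancel₀ (pow_ne_zero _ (ec_ne_zero q)) h5
        exact hgoodC.2 (kk j - kk i) hpos (by omega) h6
      · by_contra hne
        have hpos : 0 < kk i - kk j := by omega
        have hsplit : m * kk j + m * (kk i - kk j) = m * kk i := by
          rw [← Nat.mul_add, Nat.add_sub_cancel' hle]
        have h5 : (ec q) ^ (m * kk j) * (ec q) ^ (m * (kk i - kk j))
            = (ec q) ^ (m * kk j) * 1 := by
          rw [mul_one, ← pow_add, hsplit, hpow_eq]
        have h6 := mul_left_cancel₀ (pow_ne_zero _ (ec_ne_zero q)) h5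
        exact hgoodC.2 (kk i - kk j) hpos (by omega) h6
    calc i = (w.perm ^ kk i) (b i) := (hkeq i).symm
      _ = (w.perm ^ kk j) (b j) := by rw [hkk, hbij]
      _ = j := hkeq j

end GW


namespace GW
variable {m n : ℕ}

lemma hgood_calc (hm : 0 < m) {N r : ℕ} (hN : 0 < N) (hr : 1 ≤ r) {w : GW m n}
    (C : Finset (Fin n))
    (hcard : C.card = N / Nat.gcd r N)
    (hwt : cycWt w C = ((r / Nat.gcd r N : ℕ) : ZMod m)) :
    (ec ((r:ℚ)/(m*N))) ^ C.card = E m (cycWt w C) ∧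
      ∀ k, 0 < k → k < C.card → (ec ((r:ℚ)/(m*N)))^(m*k) ≠ 1 := by
  set g := Nat.gcd r N with hgdef
  have hg : 0 < g := Nat.gcd_pos_of_pos_left N hr
  have hgr : g ∣ r := Nat.gcd_dvd_left r N
  have hgN : g ∣ N := Nat.gcd_dvd_right r N
  have hd : 0 < N / g := Nat.div_pos (Nat.le_of_dvd hN hgN) hg
  have hm' : (m:ℚ) ≠ 0 := Nat.cast_ne_zero.mpr hm.ne'
  have hN' : (N:ℚ) ≠ 0 := Nat.cast_ne_zero.mpr hN.ne'
  have hg' : (g:ℚ) ≠ 0 := Nat.cast_ne_zero.mpr hg.ne'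
  constructor
  · rw [hcard, hwt, E_natCast hm, ec_pow]
    congr 1
    rw [Nat.cast_div hgN hg', Nat.cast_div hgr hg']
    field_simp
  · intro k hk0 hkd
    rw [ec_pow]
    intro h1
    have heq : ((m*k:ℕ):ℚ) * ((r:ℚ)/(m*N)) = (((k*r : ℕ):ℤ):ℚ)/((N:ℕ):ℚ) := by
      push_cast
      field_simp
    rw [heq] at h1
    rw [ec_div_eq_one_iff _ _ hN.ne'] at h1
    have h2 : N ∣ k*r := Int.ofNat_dvd.mp (by exact_mod_cast h1)
    have hNdecomp : (N/g) * g = N := Nat.div_mul_cancel hgN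
    have hrdecomp : (r/g) * g = r := Nat.div_mul_cancel hgr
    have h3 : (N/g) * g ∣ (k * (r/g)) * g := by
      rw [hNdecomp]
      calc N ∣ k * r := h2
        _ = (k * (r/g)) * g := by rw [mul_assoc, hrdecomp]
    have h4 : (N/g) ∣ k * (r/g) :=
      (Nat.mul_dvd_mul_iff_right hg).mp h3
    have hcop : Nat.Coprime (r/g) (N/g) := Nat.coprime_div_gcd_div_gcd hg
    have h5 : (N/g) ∣ k := (Nat.Coprime.dvd_of_dvd_mul_right hcop.symm) h4
    have := Nat.le_of_dvd hk0 h5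
    rw [hcard] at hkd
    omega

lemma case1_construct (hm : 0 < m) (hn : 0 < n) (w : GW m n) (r : ℕ) (hr : 1 ≤ r)
    (hC : ∀ C ∈ cycles w, C.card = n / Nat.gcd r n ∧
      cycWt w C = ((r / Nat.gcd r n : ℕ) : ZMod m)) :
    ∃ v : Fin n → ℂ, (∀ i, v i ≠ 0) ∧
      ((toMatrix w).mulVec v = (ec ((r:ℚ)/(m*n))) • v) ∧
      Function.Injective fun i => (v i)^m := by
  obtain ⟨v, hv0, heig, hinj⟩ := construction hm w ((r:ℚ)/(m*n)) ∅ (by simp)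
    (by intro C hCS; simp at hCS)
    (fun C hC' _ => hgood_calc hm hn hr C (hC C hC').1 (hC C hC').2)
  refine ⟨v, ?_, heig, hinj⟩
  intro i
  rw [Ne, hv0 i]
  simp

lemma case2_construct (hm : 0 < m) (w : GW m n) (r : ℕ) (hr : 1 ≤ r) (hn2 : 2 ≤ n)
    (C₀ : Finset (Fin n)) (hC₀mem : C₀ ∈ cycles w) (hC₀card : C₀.card = 1)
    (hC : ∀ C ∈ cycles w, C ≠ C₀ → C.card = (n-1) / Nat.gcd r (n-1) ∧
      cycWt w C = ((r / Nat.gcd r (n-1) : ℕ) : ZMod m)) :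
    ∃ v : Fin n → ℂ, (∀ i, (v i = 0 ↔ cycleOf w i = C₀)) ∧
      ((toMatrix w).mulVec v = (ec ((r:ℚ)/((m:ℚ)*((n-1 : ℕ) : ℚ)))) • v) ∧
      Function.Injective fun i => (v i)^m := by
  have hn1 : 0 < n - 1 := by omega
  obtain ⟨i0', hC₀eq⟩ := Finset.card_eq_one.mp hC₀card
  obtain ⟨v, hv0, heig, hinj⟩ := construction hm w ((r:ℚ)/((m:ℚ)*((n-1 : ℕ) : ℚ))) {C₀}
    (by intro C hCS; rw [Finset.mem_singleton] at hCS; rw [hCS]; exact hC₀mem)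
    (by
      intro C hCS D hDS i hi j hj
      rw [Finset.mem_singleton] at hCS hDS
      rw [hCS, hC₀eq, Finset.mem_singleton] at hi
      rw [hDS, hC₀eq, Finset.mem_singleton] at hj
      rw [hi, hj])
    (fun C hC' hCn => hgood_calc hm hn1 hr C
      ((hC C hC' (by simpa using hCn)).1) ((hC C hC' (by simpa using hCn)).2))
  refine ⟨v, ?_, heig, hinj⟩
  intro i
  rw [hv0 i, Finset.mem_singleton]

/-- Production of `r` from the uniform cycle data (used for the forward direction). -/
lemma cycles_eq_cycleOf_of_mem {w : GW m n} {C : Finset (Fin n)} (hC : C ∈ cycles w)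
    {i : Fin n} (hi : i ∈ C) : C = cycleOf w i := by
  obtain ⟨k0, hk0⟩ := mem_cycles.mp hC
  subst hk0
  exact (cycleOf_eq_of_mem hi).symm

lemma produce_r (hm : 0 < m) {N g d s : ℕ} (hg : 0 < g) (hd : 0 < d)
    (hcop : Nat.Coprime s d) (hN : N = g * d) :
    ∃ r : ℕ, 1 ≤ r ∧ Nat.gcd r N = g ∧ N / Nat.gcd r N = d ∧
      (r / Nat.gcd r N : ℕ) = s + m * d ∧
      ((((s + m*d : ℕ)) : ZMod m) = ((s:ℕ) : ZMod m) ∧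
        ((r : ℕ) : ZMod m) = ((g:ℕ) : ZMod m) * ((s:ℕ) : ZMod m)) := by
  refine ⟨g * (s + m*d), ?_, ?_, ?_, ?_, ?_, ?_⟩
  · have : 0 < s + m*d := by positivity
    exact Nat.one_le_iff_ne_zero.mpr (by positivity)
  · rw [hN, Nat.gcd_mul_left]
    have h2 : Nat.gcd (s + m*d) d = Nat.gcd s d := Nat.gcd_add_mul_right_left d s m
    rw [h2, hcop]
    exact mul_one g
  · rw [hN, Nat.gcd_mul_left]
    have h2 : Nat.gcd (s + m*d) d = Nat.gcd s d := Nat.gcd_add_mul_right_left d s m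
    rw [h2, hcop, mul_one, Nat.mul_div_cancel_left d hg]
  · rw [hN, Nat.gcd_mul_left]
    have h2 : Nat.gcd (s + m*d) d = Nat.gcd s d := Nat.gcd_add_mul_right_left d s m
    rw [h2, hcop, mul_one, Nat.mul_div_cancel_left _ hg]
  · push_cast
    rw [ZMod.natCast_self]
    ring
  · push_cast
    rw [ZMod.natCast_self]
    ring

lemma sum_card_eq (w : GW m n) {d : ℕ} (h : ∀ C ∈ cycles w, C.card = d) :
    n = numCycles w * d := by
  have h2 : ∑ C ∈ cycles w, C.card = ∑ _C ∈ cycles w, d :=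
    Finset.sum_congr rfl h
  rw [sum_cycles_card, Finset.sum_const, smul_eq_mul] at h2
  exact h2

lemma forward_all_nonzero (hm : 0 < m) (hn : 0 < n) {w : GW m n} {v : Fin n → ℂ} {c : ℂ}
    (heig : (toMatrix w).mulVec v = c • v)
    (hinj : Function.Injective fun i => (v i)^m)
    (hnz : ∀ i, v i ≠ 0) :
    ∃ r : ℕ, 1 ≤ r ∧ (cycles w).card = Nat.gcd r n ∧
      ∀ C ∈ cycles w, C.card = n / Nat.gcd r n ∧
        cycWt w C = ((r / Nat.gcd r n : ℕ) : ZMod m) := by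
  obtain ⟨d, s, hd, hcop, _, _, hprop⟩ := analysis hm heig hinj (hnz ⟨0, hn⟩)
  have hall : ∀ C ∈ cycles w, C.card = d ∧ cycWt w C = ((s:ℕ) : ZMod m) := by
    intro C hC
    obtain ⟨i, hi⟩ := nonempty_of_mem_cycles hC
    exact hprop C hC ⟨i, hi, hnz i⟩
  have hN : n = numCycles w * d := sum_card_eq w (fun C hC => (hall C hC).1)
  have hg : 0 < numCycles w := by
    have hne : (cycles w).Nonempty := ⟨cycleOf w ⟨0, hn⟩, cycleOf_mem_cycles w _⟩
    exact Finset.card_pos.mpr hne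
  obtain ⟨r, hr1, hgcd, hdiv, hrg, hzmod, _⟩ := produce_r hm hg hd hcop hN
  refine ⟨r, hr1, by rw [hgcd]; rfl, ?_⟩
  intro C hC
  refine ⟨by rw [hdiv]; exact (hall C hC).1, ?_⟩
  rw [hrg, hzmod]
  exact (hall C hC).2

end GW

/-- Combinatorial characterization of the regular elements of `G(m,p,n)`.
If `p < m`: `w ∈ G(m,p,n)` is regular iff there is an integer `r ≥ 1` such that, with
`g := gcd(r,n)`, `w` has exactly `g` cycles, each of length `n/g` and weight `r/g (mod m)`.
In `G(m,m,n)`: `w` is regular iff there is `r ≥ 1` such that either (1) as above, or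
(2) with `g' := gcd(r, n−1)`, `w` has exactly `g' + 1` cycles, of which one is a
`1`-cycle of weight `−r (mod m)` and the others have length `(n−1)/g'` and weight
`r/g' (mod m)`. -/
theorem stmt15 (m p n : ℕ) (hm : 0 < m) (hp : 0 < p) (hn : 0 < n) (hpm : p ∣ m) :
    (p < m → ∀ w : GW m n, GW.Gmem p hpm w →
      (GW.IsRegularElt p hpm w ↔ ∃ r : ℕ, 1 ≤ r ∧
        (GW.cycles w).card = Nat.gcd r n ∧
        ∀ C ∈ GW.cycles w, C.card = n / Nat.gcd r n ∧
          GW.cycWt w C = ((r / Nat.gcd r n : ℕ) : ZMod m))) ∧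
    (∀ w : GW m n, GW.Gmem m (dvd_refl m) w →
      (GW.IsRegularElt m (dvd_refl m) w ↔ ∃ r : ℕ, 1 ≤ r ∧
        (((GW.cycles w).card = Nat.gcd r n ∧
          ∀ C ∈ GW.cycles w, C.card = n / Nat.gcd r n ∧
            GW.cycWt w C = ((r / Nat.gcd r n : ℕ) : ZMod m)) ∨
         ((GW.cycles w).card = Nat.gcd r (n - 1) + 1 ∧
          ∃ C₀ ∈ GW.cycles w, C₀.card = 1 ∧ GW.cycWt w C₀ = -(r : ZMod m) ∧
            ∀ C ∈ GW.cycles w, C ≠ C₀ →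
              C.card = (n - 1) / Nat.gcd r (n - 1) ∧
              GW.cycWt w C = ((r / Nat.gcd r (n - 1) : ℕ) : ZMod m))))) := by
  constructor
  · -- p < m
    intro hplt w _hGw
    constructor
    · rintro ⟨v, hv0, ⟨c, heig⟩, hreg⟩
      have hinj := GW.inj_of_isRegularVec hm hreg
      have hnz := GW.nonzero_of_isRegularVec hm hp hplt hreg
      exact GW.forward_all_nonzero hm hn heig hinj hnz
    · rintro ⟨r, hr, hcard, hC⟩
      obtain ⟨v, hvnz, heig, hinj⟩ := GW.case1_construct hm hn w r hr hC
      refine ⟨v, ?_, ⟨_, heig⟩, GW.isRegularVec_of_inj_p_lt hm hplt hpm hinj hvnz⟩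
      intro h0
      exact hvnz ⟨0, hn⟩ (by rw [h0]; rfl)
  · -- p = m
    intro w hGw
    constructor
    · rintro ⟨v, hv0, ⟨c, heig⟩, hreg⟩
      have hinj := GW.inj_of_isRegularVec hm hreg
      by_cases hz : ∀ i, v i ≠ 0
      · obtain ⟨r, hr, hcard, hC⟩ := GW.forward_all_nonzero hm hn heig hinj hz
        exact ⟨r, hr, Or.inl ⟨hcard, hC⟩⟩
      · push_neg at hz
        obtain ⟨i0, hvi0⟩ := hz
        have hex1 : ∃ i₁, v i₁ ≠ 0 := by
          by_contra hcon
          push_neg at hcon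
          exact hv0 (funext fun i => hcon i)
        obtain ⟨i₁, hvi₁⟩ := hex1
        have huniq : ∀ j, v j = 0 → j = i0 := by
          intro j hj
          apply hinj
          simp only
          rw [hj, hvi0]
        have hne10 : i₁ ≠ i0 := fun h => hvi₁ (h ▸ hvi0)
        have hc0 : c ≠ 0 := by
          intro hc
          have h2 := GW.eigen_step hm heig i₁
          rw [hc, zero_mul] at h2
          exact (mul_ne_zero (GW.E_ne_zero m _) hvi₁) h2
        have hfix0 : w.perm i0 = i0 := by
          have h2 := GW.eigen_step hm heig i0
          rw [hvi0, mul_zero] at h2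
          have hz2 : v (w.perm i0) = 0 := by
            rcases mul_eq_zero.mp h2.symm with h | h
            · exact absurd h hc0
            · exact h
          exact huniq _ hz2
        set C₀ := GW.cycleOf w i0 with hC₀def
        have hC₀eq : C₀ = {i0} := GW.cycleOf_of_fixed hfix0
        have hC₀card : C₀.card = 1 := by rw [hC₀eq]; rfl
        have hC₀mem : C₀ ∈ GW.cycles w := GW.cycleOf_mem_cycles w i0
        obtain ⟨d, s, hd, hcop, _, _, hprop⟩ := GW.analysis hm heig hinj hvi₁
        have hallC : ∀ C ∈ GW.cycles w, C ≠ C₀ →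
            C.card = d ∧ GW.cycWt w C = ((s:ℕ) : ZMod m) := by
          intro C hC hCne
          obtain ⟨i, hi⟩ := GW.nonempty_of_mem_cycles hC
          refine hprop C hC ⟨i, hi, ?_⟩
          intro h0
          have hii0 : i = i0 := huniq i h0
          subst hii0
          apply hCne
          rw [hC₀def]
          exact GW.cycles_eq_cycleOf_of_mem hC hi
        have hsum : C₀.card + ∑ C ∈ (GW.cycles w).erase C₀, C.card = n :=
          (Finset.add_sum_erase _ _ hC₀mem).trans (GW.sum_cycles_card w)
        have herased : ∀ C ∈ (GW.cycles w).erase C₀, C.card = d := fun C hC =>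
          (hallC C (Finset.mem_of_mem_erase hC) (Finset.ne_of_mem_erase hC)).1
        have hsum2 : ∑ C ∈ (GW.cycles w).erase C₀, C.card
            = ((GW.cycles w).erase C₀).card * d := by
          rw [Finset.sum_congr rfl herased, Finset.sum_const, smul_eq_mul]
        set g' := ((GW.cycles w).erase C₀).card with hg'def
        have hg'card : (GW.cycles w).card = g' + 1 := by
          rw [hg'def, Finset.card_erase_of_mem hC₀mem]
          have h1 : 1 ≤ (GW.cycles w).card := Finset.card_pos.mpr ⟨C₀, hC₀mem⟩
          omega
        have hg'pos : 0 < g' := by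
          have hmemC1 : GW.cycleOf w i₁ ∈ (GW.cycles w).erase C₀ := by
            refine Finset.mem_erase.mpr ⟨?_, GW.cycleOf_mem_cycles w i₁⟩
            intro hf
            have hmem : i₁ ∈ C₀ := by rw [← hf]; exact GW.self_mem_cycleOf w i₁
            rw [hC₀eq, Finset.mem_singleton] at hmem
            exact hne10 hmem
          exact Finset.card_pos.mpr ⟨_, hmemC1⟩
        have hN : n - 1 = g' * d := by
          rw [hC₀card, hsum2] at hsum
          omega
        obtain ⟨r, hr1, hgcd, hdiv, hrg, hzmod, hrzmod⟩ :=
          GW.produce_r hm hg'pos hd hcop hN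
        refine ⟨r, hr1, Or.inr ⟨?_, C₀, hC₀mem, hC₀card, ?_, ?_⟩⟩
        · rw [hgcd]; exact hg'card
        · have hwt0 : GW.wtTot w = 0 := by
            rw [GW.Gmem, ZMod.castHom_self] at hGw
            simpa using hGw
          have hsplit : GW.cycWt w C₀ + ∑ C ∈ (GW.cycles w).erase C₀, GW.cycWt w C = 0 := by
            rw [← hwt0, GW.wtTot_eq_sum_cycWt]
            exact Finset.add_sum_erase _ _ hC₀mem
          have hwts : ∑ C ∈ (GW.cycles w).erase C₀, GW.cycWt w C
              = (g' : ZMod m) * ((s:ℕ) : ZMod m) := by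
            rw [Finset.sum_congr rfl (fun C hC =>
              (hallC C (Finset.mem_of_mem_erase hC) (Finset.ne_of_mem_erase hC)).2)]
            rw [Finset.sum_const, nsmul_eq_mul]
          rw [hwts] at hsplit
          have hfin : GW.cycWt w C₀ = -((g' : ZMod m) * ((s:ℕ) : ZMod m)) :=
            eq_neg_of_add_eq_zero_left hsplit
          rw [hfin, hrzmod]
        · intro C hCmem hCne
          refine ⟨by rw [hdiv]; exact (hallC C hCmem hCne).1, ?_⟩
          rw [hrg, hzmod]
          exact (hallC C hCmem hCne).2
    · rintro ⟨r, hr, hcase⟩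
      rcases hcase with ⟨hcard, hC⟩ | ⟨hcard, C₀, hC₀mem, hC₀card, hC₀wt, hC⟩
      · obtain ⟨v, hvnz, heig, hinj⟩ := GW.case1_construct hm hn w r hr hC
        refine ⟨v, ?_, ⟨_, heig⟩, GW.isRegularVec_of_inj_p_eq hm hinj⟩
        intro h0
        exact hvnz ⟨0, hn⟩ (by rw [h0]; rfl)
      · have hn2 : 2 ≤ n := by
          have h1 : (GW.cycles w).card ≤ n := GW.numCycles_le w
          by_contra hcon
          have hn1 : n - 1 = 0 := by omega
          rw [hcard, hn1, Nat.gcd_zero_right] at h1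
          omega
        obtain ⟨v, hv0iff, heig, hinj⟩ :=
          GW.case2_construct hm w r hr hn2 C₀ hC₀mem hC₀card
            (fun C hC' hne => hC C hC' hne)
        refine ⟨v, ?_, ⟨_, heig⟩, GW.isRegularVec_of_inj_p_eq hm hinj⟩
        have hex : ∃ C ∈ GW.cycles w, C ≠ C₀ := by
          by_contra hcon
          push_neg at hcon
          have hsub : GW.cycles w ⊆ {C₀} := fun C hC' =>
            Finset.mem_singleton.mpr (hcon C hC')
          have hle := Finset.card_le_card hsub
          rw [hcard, Finset.card_singleton] at hle
          have := Nat.gcd_pos_of_pos_left (n-1) hr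
          omega
        obtain ⟨C, hCmem, hCne⟩ := hex
        obtain ⟨i, hi⟩ := GW.nonempty_of_mem_cycles hCmem
        intro h0
        have hz0 : v i = 0 := by rw [h0]; rfl
        rw [hv0iff i] at hz0
        apply hCne
        calc C = GW.cycleOf w i := GW.cycles_eq_cycleOf_of_mem hCmem hi
          _ = C₀ := hz0
end

section
/- For w ∈ S_n, exc(w) equals the least k such that w can be written as a product of k permutations each having exactly one excedance; that is, exc is the length function ℓ_T on S_n for the generating set T = {v ∈ S_n : exc(v) = 1}. Moreover, the partial order ≤_exc on S_n defined by x ≤_exc y ⟺ exc(x) + exc(x⁻¹y) = exc(y) has a unique maximal element, namely the n-cycle (1 2 ⋯ n) (the permutation sending i to i+1 for i < n and n to 1), which is the unique element of S_n with n − 1 excedances. -/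
/-- The excedance number of a permutation: `exc w = #{i : w i > i}`. -/
def exc {n : ℕ} (w : Equiv.Perm (Fin n)) : ℕ :=
  (Finset.univ.filter fun i : Fin n => i < w i).card

open Finset Equiv

theorem Equiv.Perm.apply_inv_self {α : Type*} (f : Equiv.Perm α) (x : α) : f (f⁻¹ x) = x :=
  Equiv.apply_symm_apply f x

theorem Equiv.Perm.inv_apply_self {α : Type*} (f : Equiv.Perm α) (x : α) : f⁻¹ (f x) = x :=
  Equiv.symm_apply_apply f x

lemma exc_one {n : ℕ} : exc (1 : Equiv.Perm (Fin n)) = 0 := by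
  simp [exc]

lemma exc_eq_zero_iff {n : ℕ} {w : Equiv.Perm (Fin n)} : exc w = 0 ↔ w = 1 := by
  constructor
  · intro h
    have hle : ∀ i : Fin n, ¬ i < w i := by
      intro i hi
      have : i ∈ Finset.univ.filter fun i : Fin n => i < w i := by simp [hi]
      rw [exc, Finset.card_eq_zero] at h
      simp [h] at this
    have key : ∀ m : ℕ, ∀ i : Fin n, (i : ℕ) ≤ m → w i = i := by
      intro m
      induction m with
      | zero =>
        intro i h0
        have h1 : ¬ i < w i := hle i
        have h2 : (w i : ℕ) ≤ (i : ℕ) := by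
          rw [Fin.lt_def] at h1; omega
        exact Fin.ext (by omega)
      | succ m ih =>
        intro i hle'
        rcases Nat.lt_succ_iff_lt_or_eq.mp (Nat.lt_succ_of_le hle') with h | h
        · exact ih i (by omega)
        · have h1 : ¬ i < w i := hle i
          have h2 : (w i : ℕ) ≤ (i : ℕ) := by rw [Fin.lt_def] at h1; omega
          rcases eq_or_lt_of_le h2 with h3 | h3
          · exact Fin.ext h3
          · have h4 : w (w i) = w i := ih (w i) (by omega)
            have := w.injective h4
            rw [this]
    ext i
    exact congrArg Fin.val (key (i : ℕ) i le_rfl)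
  · rintro rfl; exact exc_one

lemma exc_mul_le {n : ℕ} (u v : Equiv.Perm (Fin n)) : exc (u * v) ≤ exc u + exc v := by
  classical
  have hsub : (Finset.univ.filter fun i : Fin n => i < (u * v) i) ⊆
      (Finset.univ.filter fun i : Fin n => i < v i) ∪
        ((Finset.univ.filter fun i : Fin n => i < u i).image fun x => v⁻¹ x) := by
    intro x hx
    simp only [Finset.mem_filter, Finset.mem_univ, true_and, Equiv.Perm.mul_apply] at hx
    by_cases h : x < v x
    · exact Finset.mem_union_left _ (by simp [h])
    · refine Finset.mem_union_right _ ?_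
      simp only [Finset.mem_image, Finset.mem_filter, Finset.mem_univ, true_and]
      exact ⟨v x, lt_of_le_of_lt (not_lt.mp h) (Finset.mem_filter.mp hx).2, by simp⟩
  have h1 := Finset.card_le_card hsub
  have h2 := Finset.card_union_le (Finset.univ.filter fun i : Fin n => i < v i)
    ((Finset.univ.filter fun i : Fin n => i < u i).image fun x => v⁻¹ x)
  have h3 := Finset.card_image_le (s := Finset.univ.filter fun i : Fin n => i < u i)
    (f := fun x => v⁻¹ x)
  unfold exc at *
  omega

lemma exc_le_sub_one {n : ℕ} (w : Equiv.Perm (Fin n)) : exc w ≤ n - 1 := by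
  cases n with
  | zero => simp [exc]
  | succ m =>
    have hsub : (Finset.univ.filter fun i : Fin (m+1) => i < w i) ⊆
        Finset.univ.erase (Fin.last m) := by
      intro x hx
      simp only [Finset.mem_filter, Finset.mem_univ, true_and] at hx
      refine Finset.mem_erase.mpr ⟨?_, Finset.mem_univ _⟩
      rintro rfl
      rw [Fin.lt_def, Fin.val_last] at hx
      have := (w (Fin.last m)).isLt
      omega
    have := Finset.card_le_card hsub
    rwa [Finset.card_erase_of_mem (Finset.mem_univ _), Finset.card_univ, Fintype.card_fin] at this

lemma exc_finRotate {n : ℕ} : exc (finRotate (n+1)) = n := by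
  have hfe : (Finset.univ.filter fun i : Fin (n+1) => i < finRotate (n+1) i) =
      Finset.univ.erase (Fin.last n) := by
    ext i
    simp only [Finset.mem_filter, Finset.mem_univ, true_and, Finset.mem_erase, and_true,
      finRotate_succ_apply]
    constructor
    · intro h
      rintro rfl
      rw [Fin.lt_def, Fin.last_add_one] at h
      simp at h
    · intro h
      have hlt : (i : ℕ) < n := by
        rcases lt_or_eq_of_le (Nat.lt_succ_iff.mp i.isLt) with h' | h'
        · exact h'
        · exact absurd (Fin.ext h' : i = Fin.last n) h
      rw [Fin.lt_def, Fin.val_add_one_of_lt (by rwa [Fin.lt_def, Fin.val_last])]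
      omega
  rw [exc, hfe, Finset.card_erase_of_mem (Finset.mem_univ _), Finset.card_univ, Fintype.card_fin]
  omega


lemma key_identity {n : ℕ} (w : Equiv.Perm (Fin (n+1))) :
    exc w + exc (w⁻¹ * finRotate (n+1)) = n := by
  classical
  have hbij : exc (w⁻¹ * finRotate (n+1)) =
      (Finset.univ.filter fun j : Fin (n+1) => ¬ j < w j ∧ w j ≠ 0).card := by
    rw [exc]
    apply Finset.card_bij (fun i _ => w⁻¹ (i + 1))
    · intro i hi
      simp only [Finset.mem_filter, Finset.mem_univ, true_and, Equiv.Perm.mul_apply,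
        finRotate_succ_apply] at hi
      have hne : i + 1 ≠ 0 := by
        intro h0
        have hv := Fin.val_add_one i
        rw [h0] at hv
        have hil : i = Fin.last n := by
          by_contra hil
          rw [if_neg hil] at hv
          simp at hv
        rw [h0, hil] at hi
        exact absurd hi (not_lt.mpr (Fin.le_last _))
      have hval : ((i + 1 : Fin (n+1)) : ℕ) = (i : ℕ) + 1 := by
        rw [Fin.val_add_one]
        split
        · rename_i h; rw [h, Fin.last_add_one] at hne; simp at hne
        · rfl
      simp only [Finset.mem_filter, Finset.mem_univ, true_and]
      constructor
      · rw [Fin.lt_def, not_lt, Equiv.Perm.apply_inv_self, hval]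
        rw [Fin.lt_def] at hi
        omega
      · rw [Equiv.Perm.apply_inv_self]; exact hne
    · intro i hi i' hi' h
      have := congrArg w h
      simp only [Equiv.Perm.apply_inv_self] at this
      exact add_right_cancel this
    · intro j hj
      simp only [Finset.mem_filter, Finset.mem_univ, true_and, not_lt] at hj
      obtain ⟨hle, hne⟩ := hj
      refine ⟨w j - 1, ?_, ?_⟩
      · simp only [Finset.mem_filter, Finset.mem_univ, true_and, Equiv.Perm.mul_apply,
          finRotate_succ_apply, sub_add_cancel, Equiv.Perm.inv_apply_self]
        have hval : ((w j - 1 : Fin (n+1)) : ℕ) = (w j : ℕ) - 1 := by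
          rw [Fin.coe_sub_one, if_neg hne]
        have hwj : 1 ≤ (w j : ℕ) := by
          have : (w j : ℕ) ≠ 0 := fun h => hne (Fin.ext h)
          omega
        rw [Fin.lt_def, hval]
        rw [Fin.le_def] at hle
        omega
      · rw [sub_add_cancel, Equiv.Perm.inv_apply_self]
  have hcard : (Finset.univ.filter fun j : Fin (n+1) => ¬ j < w j ∧ w j ≠ 0).card
      = n - exc w := by
    have he : (Finset.univ.filter fun j : Fin (n+1) => ¬ j < w j ∧ w j ≠ 0) =
        (Finset.univ.filter fun j : Fin (n+1) => ¬ j < w j).erase (w⁻¹ 0) := by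
      ext j
      simp only [Finset.mem_filter, Finset.mem_univ, true_and, Finset.mem_erase]
      constructor
      · rintro ⟨h1, h2⟩
        exact ⟨fun h => h2 (by rw [h, Equiv.Perm.apply_inv_self]), h1⟩
      · rintro ⟨h1, h2⟩
        exact ⟨h2, fun h => h1 (by rw [← h, Equiv.Perm.inv_apply_self])⟩
    rw [he, Finset.card_erase_of_mem]
    · have hsplit := Finset.card_filter_add_card_filter_not
        (s := (Finset.univ : Finset (Fin (n+1)))) (p := fun j => j < w j)
      rw [Finset.card_univ, Fintype.card_fin] at hsplit
      have : exc w ≤ n := by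
        have := exc_le_sub_one w; omega
      unfold exc at *
      omega
    · simp only [Finset.mem_filter, Finset.mem_univ, true_and, not_lt,
        Equiv.Perm.apply_inv_self]
      exact Fin.zero_le _
  have hle := exc_le_sub_one w
  rw [hbij, hcard]
  simp only [Nat.add_sub_cancel] at *
  omega

lemma exc_eq_iff_rot {n : ℕ} (w : Equiv.Perm (Fin (n+1))) :
    exc w = n ↔ w = finRotate (n+1) := by
  constructor
  · intro h
    have hsub : (Finset.univ.filter fun i : Fin (n+1) => i < w i) ⊆
        Finset.univ.erase (Fin.last n) := by
      intro x hx
      simp only [Finset.mem_filter, Finset.mem_univ, true_and] at hx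
      refine Finset.mem_erase.mpr ⟨?_, Finset.mem_univ _⟩
      rintro rfl
      rw [Fin.lt_def, Fin.val_last] at hx
      have := (w (Fin.last n)).isLt
      omega
    have hcard : (Finset.univ.erase (Fin.last n)).card = n := by
      rw [Finset.card_erase_of_mem (Finset.mem_univ _), Finset.card_univ, Fintype.card_fin]
      omega
    have heq : (Finset.univ.filter fun i : Fin (n+1) => i < w i) =
        Finset.univ.erase (Fin.last n) :=
      Finset.eq_of_subset_of_card_le hsub (by rw [hcard]; exact le_of_eq h.symm)
    have hall : ∀ i : Fin (n+1), i ≠ Fin.last n → i < w i := by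
      intro i hi
      have : i ∈ Finset.univ.erase (Fin.last n) := Finset.mem_erase.mpr ⟨hi, Finset.mem_univ _⟩
      rw [← heq] at this
      simp only [Finset.mem_filter] at this
      exact this.2
    have hlast : w (Fin.last n) = 0 := by
      by_contra hne
      have hj : w⁻¹ 0 ≠ Fin.last n := fun h => hne (by rw [← h, Equiv.Perm.apply_inv_self])
      have := hall _ hj
      rw [Equiv.Perm.apply_inv_self] at this
      exact Fin.not_lt_zero _ this
    have hval : ∀ m : ℕ, ∀ k : Fin (n+1), (k : ℕ) = m → k ≠ Fin.last n → w k = k + 1 := by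
      intro m
      induction m using Nat.strong_induction_on with
      | _ m ih =>
        intro k hk hkl
        have hk1 : ((k + 1 : Fin (n+1)) : ℕ) = (k : ℕ) + 1 := by
          rw [Fin.val_add_one, if_neg hkl]
        have hne0 : (k + 1 : Fin (n+1)) ≠ 0 := by
          intro h; rw [h] at hk1; simp at hk1
        set j := w⁻¹ (k + 1) with hjdef
        have hjl : j ≠ Fin.last n := by
          intro h
          have : w j = k + 1 := Equiv.Perm.apply_inv_self _ _
          rw [h, hlast] at this
          exact hne0 this.symm
        have hjlt : j < w j := hall j hjl
        have hwj : w j = k + 1 := Equiv.Perm.apply_inv_self _ _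
        rw [hwj] at hjlt
        have hjval : (j : ℕ) < (k : ℕ) + 1 := by rw [Fin.lt_def, hk1] at hjlt; exact hjlt
        rcases lt_or_eq_of_le (Nat.lt_succ_iff.mp hjval) with hlt | heq'
        · exfalso
          have hjl2 : j ≠ Fin.last n := hjl
          have := ih (j : ℕ) (by omega) j rfl hjl2
          have h2 : w j = j + 1 := this
          rw [hwj] at h2
          have : j = k := add_right_cancel h2.symm
          rw [this] at hlt
          omega
        · have : j = k := Fin.ext (by omega)
          rw [← hwj, this]
    ext i
    rcases eq_or_ne i (Fin.last n) with rfl | hi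
    · rw [hlast, finRotate_succ_apply, Fin.last_add_one]
    · rw [hval (i : ℕ) i rfl hi, finRotate_succ_apply]
  · rintro rfl
    exact exc_finRotate


lemma peel {n : ℕ} (w : Equiv.Perm (Fin n)) (i : Fin n) (hi : i < w i) :
    ∃ v : Equiv.Perm (Fin n), exc v = 1 ∧ exc (v⁻¹ * w) + 1 = exc w := by
  classical
  set b := w i with hbdef
  set f : ℕ → Fin n := fun j => (⇑w⁻¹)^[j] i with hfdef
  have hf0 : f 0 = i := rfl
  have hfsucc : ∀ j, f (j + 1) = w⁻¹ (f j) := by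
    intro j
    simp only [hfdef]
    rw [Function.iterate_succ_apply']
  have hwf : ∀ j, w (f (j + 1)) = f j := by
    intro j
    rw [hfsucc]
    simp
  have hex : ∃ j, ¬ (f j < f (j + 1) ∧ f (j + 1) < b) := by
    by_contra hc
    push_neg at hc
    have hmono : ∀ j : ℕ, j ≤ (f j : ℕ) := by
      intro j
      induction j with
      | zero => exact Nat.zero_le _
      | succ j ih =>
        have h1 : f j < f (j + 1) := (hc j).1
        rw [Fin.lt_def] at h1
        omega
    have h1 := hmono n
    have h2 := (f n).isLt
    omega
  set K := Nat.find hex with hKdef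
  have hK : ¬ (f K < f (K + 1) ∧ f (K + 1) < b) := Nat.find_spec hex
  have hcond : ∀ j, j < K → f j < f (j + 1) ∧ f (j + 1) < b := by
    intro j hj
    have := Nat.find_min hex hj
    simpa using this
  clear hKdef
  clear_value K
  have hfb : ∀ j, j ≤ K → f j < b := by
    intro j hj
    cases j with
    | zero => exact hi
    | succ j => exact (hcond j (by omega)).2
  have hmono : ∀ k, k ≤ K → ∀ j, j < k → f j < f k := by
    intro k
    induction k with
    | zero => omega
    | succ k ih =>
      intro hk j hj
      have h1 : f k < f (k + 1) := (hcond k (by omega)).1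
      rcases Nat.lt_succ_iff_lt_or_eq.mp hj with h | h
      · exact lt_trans (ih (by omega) j h) h1
      · rw [h]; exact h1
  -- f is injective on {0, ..., K+1}
  have hinj : ∀ j k, j ≤ K + 1 → k ≤ K + 1 → f j = f k → j = k := by
    have haux : ∀ j k, j < k → k ≤ K + 1 → f j ≠ f k := by
      intro j k hjk hk
      rcases Nat.lt_succ_iff_lt_or_eq.mp (Nat.lt_succ_of_le hk) with h | h
      · exact ne_of_lt (hmono k (by omega) j hjk)
      · subst h
        intro heq
        -- f j = f (K+1), j ≤ K
        have h1 : w (f (K + 1)) = f K := hwf K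
        rw [← heq] at h1
        cases j with
        | zero =>
          rw [hf0] at h1
          exact absurd h1 (by rw [← hbdef]; exact ne_of_gt (hfb K (le_refl K)))
        | succ j =>
          rw [hwf j] at h1
          have : j = K := by
            by_contra hne
            have hjK : j < K := by omega
            exact absurd h1 (ne_of_lt (hmono K (le_refl K) j hjK))
          omega
    intro j k hj hk heq
    rcases lt_trichotomy j k with h | h | h
    · exact absurd heq (haux j k h hk)
    · exact h
    · exact absurd heq.symm (haux k j h hj)
  -- the list for the decreasing cycle
  set L : List (Fin n) := (List.map f (List.range (K + 1)).reverse) ++ [b] with hLdef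
  have hlen : L.length = K + 2 := by simp [hLdef]
  have hget : ∀ t (ht : t < K + 2),
      L[t]'(by rw [hlen]; exact ht) = if t ≤ K then f (K - t) else b := by
    intro t ht
    by_cases htK : t ≤ K
    · rw [if_pos htK]
      simp only [hLdef]
      rw [List.getElem_append_left (by simp; omega)]
      rw [List.getElem_map, List.getElem_reverse, List.getElem_range]
      congr 1
      simp
      try omega
    · rw [if_neg htK]
      have ht1 : t = K + 1 := by omega
      subst ht1
      simp only [hLdef]
      rw [List.getElem_append_right (by simp)]
      simp
  have hmem : ∀ x : Fin n, x ∈ L ↔ (∃ j, j ≤ K ∧ f j = x) ∨ x = b := by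
    intro x
    simp [hLdef, Nat.lt_succ_iff]
  have hnodup : L.Nodup := by
    rw [hLdef, List.nodup_append]
    refine ⟨?_, List.nodup_singleton b, ?_⟩
    · refine List.Nodup.map_on ?_ (List.nodup_reverse.mpr List.nodup_range)
      intro x hx y hy hxy
      rw [List.mem_reverse, List.mem_range] at hx hy
      exact hinj x y (by omega) (by omega) hxy
    · intro x hx y hx2
      rw [List.mem_map] at hx
      obtain ⟨j, hj, rfl⟩ := hx
      rw [List.mem_reverse, List.mem_range] at hj
      rw [List.mem_singleton] at hx2
      rw [hx2]; exact ne_of_lt (hfb j (by omega))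
  set v := L.formPerm with hvdef
  have happ : ∀ t, t < K + 2 →
      v (if t ≤ K then f (K - t) else b) =
        if (t + 1) % (K + 2) ≤ K then f (K - (t + 1) % (K + 2)) else b := by
    intro t ht
    rw [← hget t ht, ← hget ((t + 1) % (K + 2)) (Nat.mod_lt _ (by omega))]
    have h := List.formPerm_apply_getElem L hnodup t (by rw [hlen]; exact ht)
    simp only [hlen] at h
    exact h
  have hv0 : v (f 0) = b := by
    have h := happ K (by omega)
    rw [if_pos (le_refl K), Nat.sub_self] at h
    rw [Nat.mod_eq_of_lt (by omega), if_neg (by omega)] at h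
    exact h
  have hvj : ∀ j, 1 ≤ j → j ≤ K → v (f j) = f (j - 1) := by
    intro j h1 hjK
    have h := happ (K - j) (by omega)
    rw [if_pos (by omega)] at h
    have e : K - (K - j) = j := by omega
    rw [e, Nat.mod_eq_of_lt (by omega), if_pos (by omega)] at h
    have e2 : K - (K - j + 1) = j - 1 := by omega
    rw [e2] at h
    exact h
  have hvb : v b = f K := by
    have h := happ (K + 1) (by omega)
    rw [if_neg (by omega), Nat.mod_self, if_pos (by omega), Nat.sub_zero] at h
    exact h
  have hvnot : ∀ x : Fin n, x ∉ L → v x = x := fun x hx =>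
    List.formPerm_apply_of_notMem hx
  have hexcv : exc v = 1 := by
    have hfe : (Finset.univ.filter fun x : Fin n => x < v x) = {f 0} := by
      ext x
      simp only [Finset.mem_filter, Finset.mem_univ, true_and, Finset.mem_singleton]
      constructor
      · intro hx
        by_cases hxL : x ∈ L
        · rcases (hmem x).mp hxL with ⟨j, hj, rfl⟩ | rfl
          · cases j with
            | zero => rfl
            | succ j =>
              rw [hvj (j + 1) (by omega) hj] at hx
              simp only [Nat.add_sub_cancel] at hx
              exact absurd (hmono (j + 1) hj j (by omega)) (not_lt.mpr (le_of_lt hx))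
          · rw [hvb] at hx
            exact absurd (hfb K le_rfl) (not_lt.mpr (le_of_lt hx))
        · rw [hvnot x hxL] at hx
          exact absurd hx (lt_irrefl x)
      · intro hx
        rw [hx, hv0, hf0]
        exact hi
    rw [exc, hfe, Finset.card_singleton]
  have hvb' : v⁻¹ b = f 0 := by rw [← hv0, Equiv.Perm.inv_apply_self]
  have hvj' : ∀ j, j < K → v⁻¹ (f j) = f (j + 1) := by
    intro j hj
    have h := hvj (j + 1) (by omega) (by omega)
    simp only [Nat.add_sub_cancel] at h
    rw [← h, Equiv.Perm.inv_apply_self]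
  have hvK' : v⁻¹ (f K) = b := by rw [← hvb, Equiv.Perm.inv_apply_self]
  have hux : ∀ x : Fin n, (∀ j, j ≤ K + 1 → x ≠ f j) → (v⁻¹ * w) x = w x := by
    intro x hx
    rw [Equiv.Perm.mul_apply]
    have hwx : w x ∉ L := by
      intro hmem'
      rcases (hmem _).mp hmem' with ⟨j, hj, hfj⟩ | hb
      · have hx2 : x = f (j + 1) := by
          rw [hfsucc, hfj]
          simp
        exact hx (j + 1) (by omega) hx2
      · have hx2 : x = f 0 := w.injective (by rw [hf0, ← hbdef, hb])
        exact hx 0 (by omega) hx2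
    have h := hvnot _ hwx
    rw [← h, Equiv.Perm.inv_apply_self, h]
  have hu0 : (v⁻¹ * w) (f 0) = f 0 := by
    rw [Equiv.Perm.mul_apply, hf0, ← hbdef, hvb', hf0]
  have huj : ∀ j, 1 ≤ j → j ≤ K → (v⁻¹ * w) (f j) = f j := by
    intro j h1 hj
    rw [Equiv.Perm.mul_apply]
    obtain ⟨j', rfl⟩ : ∃ j', j = j' + 1 := ⟨j - 1, by omega⟩
    rw [hwf j', hvj' j' (by omega)]
  have huK : (v⁻¹ * w) (f (K + 1)) = b := by
    rw [Equiv.Perm.mul_apply, hwf K, hvK']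
  have hfe2 : (Finset.univ.filter fun x : Fin n => x < (v⁻¹ * w) x) =
      (Finset.univ.filter fun x : Fin n => x < w x).erase (f 0) := by
    ext x
    simp only [Finset.mem_filter, Finset.mem_univ, true_and, Finset.mem_erase]
    by_cases hx : ∃ j, j ≤ K + 1 ∧ x = f j
    · obtain ⟨j, hj, rfl⟩ := hx
      rcases Nat.lt_succ_iff_lt_or_eq.mp (Nat.lt_succ_of_le hj) with hjK | hjK
      · have hjK' : j ≤ K := by omega
        cases j with
        | zero =>
          rw [hu0]
          constructor
          · intro h; exact absurd h (lt_irrefl _)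
          · rintro ⟨h1, -⟩; exact absurd rfl h1
        | succ j =>
          rw [huj (j + 1) (by omega) hjK']
          constructor
          · intro h; exact absurd h (lt_irrefl _)
          · rintro ⟨-, h2⟩
            rw [hwf j] at h2
            exact absurd (hmono (j + 1) hjK' j (by omega)) (not_lt.mpr (le_of_lt h2))
      · subst hjK
        rw [huK, hwf K]
        have hne0 : f (K + 1) ≠ f 0 := by
          intro h
          have h2 := hwf K
          rw [h, hf0, ← hbdef] at h2
          exact absurd h2.symm (ne_of_lt (hfb K le_rfl))
        rcases not_and_or.mp hK with h1 | h1
        · have hle : f (K + 1) ≤ f K := not_lt.mp h1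
          have hne : f (K + 1) ≠ f K := by
            intro h
            have h2 := hwf K
            rw [h] at h2
            cases K with
            | zero =>
              rw [hf0, ← hbdef] at h2
              exact absurd h2.symm (ne_of_lt hi)
            | succ K' =>
              rw [hwf K'] at h2
              exact absurd h2 (ne_of_lt (hmono (K' + 1) le_rfl K' (by omega)))
          have hlt : f (K + 1) < f K := lt_of_le_of_ne hle hne
          constructor
          · intro _; exact ⟨hne0, hlt⟩
          · intro _; exact lt_trans hlt (hfb K le_rfl)
        · have hge : b ≤ f (K + 1) := not_lt.mp h1
          constructor
          · intro h; exact absurd h (not_lt.mpr hge)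
          · rintro ⟨-, h2⟩
            exact absurd (lt_of_lt_of_le (lt_trans h2 (hfb K le_rfl)) hge) (lt_irrefl _)
    · push_neg at hx
      rw [hux x hx]
      have hxne : x ≠ f 0 := hx 0 (by omega)
      constructor
      · intro h; exact ⟨hxne, h⟩
      · rintro ⟨-, h⟩; exact h
  refine ⟨v, hexcv, ?_⟩
  have hmem0 : f 0 ∈ Finset.univ.filter fun x : Fin n => x < w x := by
    simp only [Finset.mem_filter, Finset.mem_univ, true_and]
    rw [hf0, ← hbdef]
    exact hi
  rw [exc, exc, hfe2, Finset.card_erase_of_mem hmem0]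
  have hpos : 0 < (Finset.univ.filter fun x : Fin n => x < w x).card :=
    Finset.card_pos.mpr ⟨f 0, hmem0⟩
  omega


/-- `exc` is the length function on `S_n` for the generating set of permutations with
exactly one excedance: `exc w` is the least `k` such that `w` is a product of `k`
permutations each having exactly one excedance.  Moreover, the partial order `≤_exc`
defined by `x ≤_exc y ↔ exc x + exc (x⁻¹y) = exc y` has a unique maximal element, namely
the `n`-cycle `(1 2 ⋯ n)` (the permutation `i ↦ i + 1` cyclically, `finRotate n`), which
is also the unique element of `S_n` with `n - 1` excedances. -/

theorem stmt19 (n : ℕ) :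
    (∀ w : Equiv.Perm (Fin n),
        (∃ l : List (Equiv.Perm (Fin n)),
            (∀ v ∈ l, exc v = 1) ∧ l.length = exc w ∧ l.prod = w) ∧
        (∀ l : List (Equiv.Perm (Fin n)),
            (∀ v ∈ l, exc v = 1) → l.prod = w → exc w ≤ l.length)) ∧
    (∀ w : Equiv.Perm (Fin n),
        (∀ y : Equiv.Perm (Fin n), exc w + exc (w⁻¹ * y) = exc y → y = w) ↔
          w = finRotate n) ∧
    (∀ w : Equiv.Perm (Fin n), exc w = n - 1 ↔ w = finRotate n) := by
  refine ⟨?_, ?_, ?_⟩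
  · intro w
    constructor
    · -- existence of a factorization of length `exc w`
      have main : ∀ k, ∀ w : Equiv.Perm (Fin n), exc w = k →
          ∃ l : List (Equiv.Perm (Fin n)),
            (∀ v ∈ l, exc v = 1) ∧ l.length = k ∧ l.prod = w := by
        intro k
        induction k with
        | zero =>
          intro w hw
          exact ⟨[], by simp, rfl, by rw [List.prod_nil, exc_eq_zero_iff.mp hw]⟩
        | succ k ih =>
          intro w hw
          have hne : (Finset.univ.filter fun i : Fin n => i < w i).Nonempty := by
            rw [← Finset.card_pos]
            have : exc w = k + 1 := hw
            rw [exc] at this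
            omega
          obtain ⟨i, hi⟩ := hne
          simp only [Finset.mem_filter, Finset.mem_univ, true_and] at hi
          obtain ⟨v, hv1, hv2⟩ := peel w i hi
          have hexc : exc (v⁻¹ * w) = k := by omega
          obtain ⟨l, hl1, hl2, hl3⟩ := ih (v⁻¹ * w) hexc
          refine ⟨v :: l, ?_, by simp [hl2], ?_⟩
          · intro x hx
            rcases List.mem_cons.mp hx with rfl | hx
            · exact hv1
            · exact hl1 x hx
          · rw [List.prod_cons, hl3, mul_inv_cancel_left]
      obtain ⟨l, h1, h2, h3⟩ := main (exc w) w rfl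
      exact ⟨l, h1, h2, h3⟩
    · -- minimality
      have main : ∀ l : List (Equiv.Perm (Fin n)),
          (∀ v ∈ l, exc v = 1) → exc l.prod ≤ l.length := by
        intro l
        induction l with
        | nil => intro _; rw [List.prod_nil, exc_one]; exact Nat.zero_le _
        | cons v t ih =>
          intro h
          rw [List.prod_cons]
          have h1 := exc_mul_le v t.prod
          have h2 := ih (fun x hx => h x (List.mem_cons_of_mem _ hx))
          have h3 := h v List.mem_cons_self
          simp only [List.length_cons]
          omega
      intro l hl hprod
      rw [← hprod]
      exact main l hl
  · -- the unique maximal element of the excedance order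
    intro w
    cases n with
    | zero =>
      constructor
      · intro _; exact Subsingleton.elim _ _
      · intro _ y _; exact Subsingleton.elim _ _
    | succ m =>
      constructor
      · intro h
        exact (h (finRotate (m + 1))
          (by rw [exc_finRotate]; exact key_identity w)).symm
      · rintro rfl
        intro y hy
        rw [exc_finRotate] at hy
        have hle := exc_le_sub_one y
        have h0 : exc ((finRotate (m + 1))⁻¹ * y) = 0 := by omega
        exact (inv_mul_eq_one.mp (exc_eq_zero_iff.mp h0)).symm
  · -- the unique element with `n - 1` excedances
    intro w
    cases n with
    | zero =>
      constructor
      · intro _; exact Subsingleton.elim _ _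
      · intro _
        simp [exc]
    | succ m => exact exc_eq_iff_rot w
end
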